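/- arXiv:0704.1397 — 13 statements merged into one kernel-verified Lean document; each statement's English description precedes it below -/
import Mathlib

section
/- Let p be an odd prime, d an odd positive integer, and f : ℤ_p → K a continuous function. Then the sequence N ↦ Σ_{a=0}^{dp^N − 1} (−1)^a f(a) converges in K as N → ∞; that is, the fermionic p-adic integral I₋₁(f) = ∫_X f dμ₋₁ exists for every continuous f. -/
open Filter

private lemma sum_range_mul_block {K : Type*} [AddCommMonoid K] (g : ℕ → K) (n m : ℕ) :
    ∑ a ∈ Finset.range (n * m), g a
      = ∑ j ∈ Finset.range n, ∑ r ∈ Finset.range m, g (j * m + r) := by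
  induction n with
  | zero => simp
  | succ n ih =>
    have h1 : (n + 1) * m = n * m + m := by ring
    rw [Finset.sum_range_succ, ← ih, h1, Finset.range_eq_Ico,
      ← Finset.sum_Ico_consecutive g (Nat.zero_le (n * m)) (Nat.le_add_right _ m)]
    congr 1
    · rw [Finset.range_eq_Ico]
    rw [Finset.sum_Ico_eq_sum_range, Nat.add_sub_cancel_left, Finset.range_eq_Ico]

/-- For an odd prime `p`, an odd positive integer `d`, and a continuous
function `f : ℤ_p → K` (with `K` a complete nonarchimedean normed field that is a
`ℚ_p`-algebra with isometric structure map), the sequence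
`N ↦ ∑_{a=0}^{d p^N − 1} (−1)^a f(a)` converges in `K`; i.e. the fermionic `p`-adic
integral `I₋₁(f)` exists for every continuous `f`. -/
theorem fermionic_integral_exists
    {p : ℕ} [Fact p.Prime] (hp : Odd p)
    {K : Type*} [NontriviallyNormedField K] [CompleteSpace K] [IsUltrametricDist K]
    [Algebra ℚ_[p] K] (halg : ∀ x : ℚ_[p], ‖algebraMap ℚ_[p] K x‖ = ‖x‖)
    {d : ℕ} (hd : Odd d) (hdpos : 0 < d)
    (f : ℤ_[p] → K) (hf : Continuous f) :
    ∃ L : K,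
      Tendsto (fun N : ℕ => ∑ a ∈ Finset.range (d * p ^ N), (-1 : K) ^ a * f (a : ℤ_[p]))
        atTop (nhds L) := by
  set S : ℕ → K := fun N => ∑ a ∈ Finset.range (d * p ^ N), (-1 : K) ^ a * f (a : ℤ_[p]) with hS
  set g : ℕ → K := fun N => S (N + 1) - S N with hg
  -- key formula for the difference
  have key : ∀ N : ℕ, g N = ∑ j ∈ Finset.range p, (-1 : K) ^ j *
      ∑ r ∈ Finset.range (d * p ^ N),
        (-1 : K) ^ r * (f ((j * (d * p ^ N) + r : ℕ) : ℤ_[p]) - f (r : ℤ_[p])) := by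
    intro N
    have hm : Odd (d * p ^ N) := hd.mul (hp.pow)
    have hsplit : S (N + 1) = ∑ j ∈ Finset.range p, (-1 : K) ^ j *
        ∑ r ∈ Finset.range (d * p ^ N),
          (-1 : K) ^ r * f ((j * (d * p ^ N) + r : ℕ) : ℤ_[p]) := by
      simp only [hS]
      rw [show d * p ^ (N + 1) = p * (d * p ^ N) from by ring, sum_range_mul_block]
      refine Finset.sum_congr rfl fun j _ => ?_
      rw [Finset.mul_sum]
      refine Finset.sum_congr rfl fun r _ => ?_
      rw [pow_add, pow_mul', hm.neg_one_pow]
      ring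
    have hone : (∑ j ∈ Finset.range p, (-1 : K) ^ j) = 1 := by
      rw [neg_one_geom_sum, if_neg (Nat.not_even_iff_odd.mpr hp)]
    calc g N = S (N + 1) - (∑ j ∈ Finset.range p, (-1 : K) ^ j) * S N := by
          rw [hone, one_mul]
      _ = _ := by
          rw [hsplit, Finset.sum_mul, ← Finset.sum_sub_distrib]
          refine Finset.sum_congr rfl fun j _ => ?_
          rw [← mul_sub, ← Finset.sum_sub_distrib]
          congr 1
          refine Finset.sum_congr rfl fun r _ => ?_
          ring
  -- g tends to zero
  have hp1 : (1 : ℝ) < p := Nat.one_lt_cast.mpr (Fact.out : p.Prime).one_lt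
  have hgto : Tendsto g atTop (nhds 0) := by
    rw [NormedAddCommGroup.tendsto_nhds_zero]
    intro ε hε
    obtain ⟨δ, hδ, hδf⟩ := Metric.uniformContinuous_iff.mp
      (CompactSpace.uniformContinuous_of_continuous hf) (ε / 2) (half_pos hε)
    have hto : Tendsto (fun N : ℕ => ((p : ℝ)⁻¹) ^ N) atTop (nhds 0) :=
      tendsto_pow_atTop_nhds_zero_of_lt_one (by positivity)
        (inv_lt_one_of_one_lt₀ hp1)
    filter_upwards [hto.eventually (gt_mem_nhds hδ)] with N hN
    have hbound : ∀ j ∈ Finset.range p, ∀ r ∈ Finset.range (d * p ^ N),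
        ‖f ((j * (d * p ^ N) + r : ℕ) : ℤ_[p]) - f (r : ℤ_[p])‖ ≤ ε / 2 := by
      intro j _ r _
      refine le_of_lt ?_
      have hd1 : dist ((j * (d * p ^ N) + r : ℕ) : ℤ_[p]) ((r : ℕ) : ℤ_[p]) < δ := by
        have : ((j * (d * p ^ N) + r : ℕ) : ℤ_[p]) - ((r : ℕ) : ℤ_[p])
            = ((j * d : ℕ) : ℤ_[p]) * ((p : ℤ_[p]) ^ N) := by push_cast; ring
        rw [dist_eq_norm, this]
        calc ‖((j * d : ℕ) : ℤ_[p]) * (p : ℤ_[p]) ^ N‖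
            ≤ ‖((j * d : ℕ) : ℤ_[p])‖ * ‖(p : ℤ_[p]) ^ N‖ := norm_mul_le _ _
          _ ≤ 1 * ((p : ℝ)⁻¹) ^ N := by
              have hpn : ‖(p : ℤ_[p]) ^ N‖ = ((p : ℝ)⁻¹) ^ N := by
                rw [PadicInt.norm_p_pow, zpow_neg, zpow_natCast, inv_pow]
              rw [hpn]
              gcongr
              exact PadicInt.norm_le_one _
          _ = ((p : ℝ)⁻¹) ^ N := one_mul _
          _ < δ := hN
      simpa [dist_eq_norm] using hδf hd1
    have : ‖g N‖ ≤ ε / 2 := by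
      rw [key N]
      refine IsUltrametricDist.norm_sum_le_of_forall_le_of_nonneg (le_of_lt (half_pos hε)) ?_
      intro j hj
      rw [norm_mul, norm_pow, norm_neg, norm_one, one_pow, one_mul]
      refine IsUltrametricDist.norm_sum_le_of_forall_le_of_nonneg (le_of_lt (half_pos hε)) ?_
      intro r hr
      rw [norm_mul, norm_pow, norm_neg, norm_one, one_pow, one_mul]
      exact hbound j hj r hr
    exact lt_of_le_of_lt this (half_lt_self hε)
  -- summability and conclusion
  have hsum : Summable g :=
    NonarchimedeanAddGroup.summable_of_tendsto_cofinite_zero (by rwa [Nat.cofinite_eq_atTop])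
  obtain ⟨L, hL⟩ := hsum
  refine ⟨S 0 + L, ?_⟩
  have htel : ∀ N, S N = S 0 + ∑ k ∈ Finset.range N, g k := by
    intro N
    rw [hg]
    simp only [Finset.sum_range_sub (fun k => S k)]
    ring
  have := hL.tendsto_sum_nat.const_add (S 0)
  simpa [← htel] using this
end

section
/- Let p be an odd prime, d an odd positive integer, and f : ℤ_p → K a continuous function, and let f₁(t) = f(t+1). Then I₋₁(f₁) and I₋₁(f) both exist and I₋₁(f₁) + I₋₁(f) = 2 f(0); that is, lim_{N→∞} Σ_{a=0}^{dp^N−1} (−1)^a (f(a+1) + f(a)) = 2 f(0). -/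
open Filter

private lemma sum_range_mul_blocks {M : Type*} [AddCommMonoid M] (h : ℕ → M) (n m : ℕ) :
    ∑ a ∈ Finset.range (n * m), h a
      = ∑ i ∈ Finset.range n, ∑ b ∈ Finset.range m, h (i * m + b) := by
  induction n with
  | zero => simp
  | succ n ih =>
    rw [Finset.sum_range_succ, ← ih, Nat.succ_mul, Finset.range_eq_Ico,
      ← Finset.sum_Ico_consecutive h (Nat.zero_le (n * m)) (Nat.le_add_right (n * m) m)]
    congr 1
    · rw [Finset.range_eq_Ico]
    rw [Finset.sum_Ico_eq_sum_range]
    simp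

private lemma cauchySeq_of_diff_tendsto {K : Type*} [SeminormedAddCommGroup K]
    [IsUltrametricDist K] (u : ℕ → K)
    (h : Tendsto (fun n => u (n + 1) - u n) atTop (nhds 0)) : CauchySeq u := by
  rw [Metric.cauchySeq_iff]
  intro ε hε
  obtain ⟨N, hN⟩ := Metric.tendsto_atTop.mp h (ε / 2) (by linarith)
  refine ⟨N, fun m hm n hn => ?_⟩
  have key : ∀ a b : ℕ, N ≤ a → a ≤ b → ‖u b - u a‖ < ε := by
    intro a b ha hab
    have hsum : u b - u a = ∑ k ∈ Finset.Ico a b, (u (k + 1) - u k) := by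
      rw [Finset.sum_Ico_eq_sub _ hab, Finset.sum_range_sub, Finset.sum_range_sub]
      abel
    rw [hsum]
    have hbound : ‖∑ k ∈ Finset.Ico a b, (u (k + 1) - u k)‖ ≤ ε / 2 := by
      apply IsUltrametricDist.norm_sum_le_of_forall_le_of_nonneg (by linarith)
      intro k hk
      have hkN : N ≤ k := le_trans ha (Finset.mem_Ico.mp hk).1
      have := hN k hkN
      rw [dist_eq_norm, sub_zero] at this
      exact this.le
    linarith
  rcases le_total n m with hle | hle
  · rw [dist_eq_norm]
    exact key n m hn hle
  · rw [dist_comm, dist_eq_norm]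
    exact key m n hm hle

private lemma fermionic_sum_cauchy
    {p : ℕ} [Fact p.Prime] (hp : Odd p)
    {K : Type*} [NontriviallyNormedField K] [IsUltrametricDist K]
    {d : ℕ} (hd : Odd d)
    (g : ℤ_[p] → K) (hg : Continuous g) :
    CauchySeq (fun N : ℕ => ∑ a ∈ Finset.range (d * p ^ N),
      (-1 : K) ^ a * g (a : ℤ_[p])) := by
  set S : ℕ → K := fun N => ∑ a ∈ Finset.range (d * p ^ N),
    (-1 : K) ^ a * g (a : ℤ_[p]) with hS
  apply cauchySeq_of_diff_tendsto
  rw [NormedAddCommGroup.tendsto_nhds_zero]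
  intro ε hε
  -- uniform continuity of g
  have hUC : UniformContinuous g := CompactSpace.uniformContinuous_of_continuous hg
  obtain ⟨δ, hδ, hδ'⟩ := Metric.uniformContinuous_iff.mp hUC (ε / 2) (by linarith)
  -- pick N₀ with ‖p‖^N < δ for N ≥ N₀
  have hplt : ‖(p : ℤ_[p])‖ < 1 := by
    rw [PadicInt.norm_p]
    have hp1 : 1 < (p : ℝ) := by exact_mod_cast (Fact.out : p.Prime).one_lt
    rw [inv_lt_one_iff₀]; right; exact hp1
  have hpnn : (0 : ℝ) ≤ ‖(p : ℤ_[p])‖ := norm_nonneg _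
  have htend : Tendsto (fun N : ℕ => ‖(p : ℤ_[p])‖ ^ N) atTop (nhds 0) :=
    tendsto_pow_atTop_nhds_zero_of_lt_one hpnn hplt
  obtain ⟨N₀, hN₀⟩ := Metric.tendsto_atTop.mp htend δ hδ
  filter_upwards [eventually_ge_atTop N₀] with N hN
  set m : ℕ := d * p ^ N with hm
  have hmodd : Odd m := hd.mul (hp.pow)
  have hmul : d * p ^ (N + 1) = p * m := by rw [hm]; ring
  -- the distance bound for shifted points
  have hdist : ∀ i b : ℕ, dist ((i * m + b : ℕ) : ℤ_[p]) ((b : ℕ) : ℤ_[p]) < δ := by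
    intro i b
    have : ((i * m + b : ℕ) : ℤ_[p]) - ((b : ℕ) : ℤ_[p]) = ((i * d : ℕ) : ℤ_[p]) * (p : ℤ_[p]) ^ N := by
      push_cast [hm]; ring
    rw [dist_eq_norm, this]
    calc ‖((i * d : ℕ) : ℤ_[p]) * (p : ℤ_[p]) ^ N‖
        ≤ ‖((i * d : ℕ) : ℤ_[p])‖ * ‖(p : ℤ_[p]) ^ N‖ := norm_mul_le _ _
      _ ≤ 1 * ‖(p : ℤ_[p]) ^ N‖ := by
          apply mul_le_mul_of_nonneg_right (PadicInt.norm_le_one _) (norm_nonneg _)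
      _ = ‖(p : ℤ_[p])‖ ^ N := by rw [one_mul, norm_pow]
      _ < δ := by have := hN₀ N hN; rwa [Real.dist_eq, sub_zero, abs_of_nonneg (pow_nonneg hpnn N)] at this
  -- expand S (N+1)
  have hexp : S (N + 1) = ∑ i ∈ Finset.range p, ∑ b ∈ Finset.range m,
      ((-1 : K) ^ i * (-1 : K) ^ b) * g ((i * m + b : ℕ) : ℤ_[p]) := by
    rw [hS]
    simp only [hmul]
    rw [sum_range_mul_blocks (fun a => (-1 : K) ^ a * g (a : ℤ_[p])) p m]
    refine Finset.sum_congr rfl fun i _ => Finset.sum_congr rfl fun b _ => ?_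
    have : (-1 : K) ^ (i * m + b) = (-1 : K) ^ i * (-1 : K) ^ b := by
      rw [pow_add, pow_mul', hmodd.neg_one_pow]
    rw [this]
  have hgeom : ∑ i ∈ Finset.range p, (-1 : K) ^ i = 1 := by
    rw [neg_one_geom_sum, if_neg (Nat.not_even_iff_odd.mpr hp)]
  have hSN : S N = ∑ i ∈ Finset.range p, ∑ b ∈ Finset.range m,
      ((-1 : K) ^ i * (-1 : K) ^ b) * g ((b : ℕ) : ℤ_[p]) := by
    have : ∀ i : ℕ, ∑ b ∈ Finset.range m, ((-1 : K) ^ i * (-1 : K) ^ b) * g ((b : ℕ) : ℤ_[p])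
        = (-1 : K) ^ i * S N := by
      intro i
      rw [hS, Finset.mul_sum]
      exact Finset.sum_congr rfl fun b _ => by ring
    simp only [this]
    rw [← Finset.sum_mul, hgeom, one_mul]
  have hdiff : S (N + 1) - S N = ∑ i ∈ Finset.range p, ∑ b ∈ Finset.range m,
      ((-1 : K) ^ i * (-1 : K) ^ b) *
        (g ((i * m + b : ℕ) : ℤ_[p]) - g ((b : ℕ) : ℤ_[p])) := by
    rw [hexp, hSN, ← Finset.sum_sub_distrib]
    refine Finset.sum_congr rfl fun i _ => ?_
    rw [← Finset.sum_sub_distrib]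
    exact Finset.sum_congr rfl fun b _ => by ring
  rw [hdiff]
  have hbound : ‖∑ i ∈ Finset.range p, ∑ b ∈ Finset.range m,
      ((-1 : K) ^ i * (-1 : K) ^ b) *
        (g ((i * m + b : ℕ) : ℤ_[p]) - g ((b : ℕ) : ℤ_[p]))‖ ≤ ε / 2 := by
    apply IsUltrametricDist.norm_sum_le_of_forall_le_of_nonneg (by linarith)
    intro i _
    apply IsUltrametricDist.norm_sum_le_of_forall_le_of_nonneg (by linarith)
    intro b _
    have hg' : ‖g ((i * m + b : ℕ) : ℤ_[p]) - g ((b : ℕ) : ℤ_[p])‖ < ε / 2 := by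
      have := hδ' (hdist i b)
      rwa [dist_eq_norm] at this
    calc ‖((-1 : K) ^ i * (-1 : K) ^ b) *
          (g ((i * m + b : ℕ) : ℤ_[p]) - g ((b : ℕ) : ℤ_[p]))‖
        = ‖g ((i * m + b : ℕ) : ℤ_[p]) - g ((b : ℕ) : ℤ_[p])‖ := by
          rw [norm_mul, norm_mul, norm_pow, norm_pow, norm_neg, norm_one, one_pow, one_pow,
            one_mul, one_mul]
      _ ≤ ε / 2 := hg'.le
  linarith

/-- For a continuous `f : ℤ_p → K` and `f₁(t) = f(t+1)`, both fermionic
`p`-adic integrals `I₋₁(f₁)` and `I₋₁(f)` exist and `I₋₁(f₁) + I₋₁(f) = 2 f(0)`. -/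
theorem fermionic_integral_shift_one
    {p : ℕ} [Fact p.Prime] (hp : Odd p)
    {K : Type*} [NontriviallyNormedField K] [CompleteSpace K] [IsUltrametricDist K]
    [Algebra ℚ_[p] K] (halg : ∀ x : ℚ_[p], ‖algebraMap ℚ_[p] K x‖ = ‖x‖)
    {d : ℕ} (hd : Odd d) (hdpos : 0 < d)
    (f : ℤ_[p] → K) (hf : Continuous f) :
    ∃ L₁ L : K,
      Tendsto (fun N : ℕ => ∑ a ∈ Finset.range (d * p ^ N),
          (-1 : K) ^ a * f ((a : ℤ_[p]) + 1)) atTop (nhds L₁) ∧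
      Tendsto (fun N : ℕ => ∑ a ∈ Finset.range (d * p ^ N),
          (-1 : K) ^ a * f (a : ℤ_[p])) atTop (nhds L) ∧
      L₁ + L = 2 * f 0 := by
  set f₁ : ℤ_[p] → K := fun t => f (t + 1) with hf₁def
  have hf₁ : Continuous f₁ := hf.comp (continuous_id.add continuous_const)
  have hc₁ : CauchySeq (fun N : ℕ => ∑ a ∈ Finset.range (d * p ^ N),
      (-1 : K) ^ a * f₁ (a : ℤ_[p])) := fermionic_sum_cauchy hp hd f₁ hf₁
  have hc : CauchySeq (fun N : ℕ => ∑ a ∈ Finset.range (d * p ^ N),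
      (-1 : K) ^ a * f (a : ℤ_[p])) := fermionic_sum_cauchy hp hd f hf
  obtain ⟨L₁, hL₁⟩ := cauchySeq_tendsto_of_complete hc₁
  obtain ⟨L, hL⟩ := cauchySeq_tendsto_of_complete hc
  have heq : (fun N : ℕ => ∑ a ∈ Finset.range (d * p ^ N),
      (-1 : K) ^ a * f ((a : ℤ_[p]) + 1))
      = (fun N : ℕ => ∑ a ∈ Finset.range (d * p ^ N), (-1 : K) ^ a * f₁ (a : ℤ_[p])) := by
    funext N; exact Finset.sum_congr rfl fun a _ => rfl
  refine ⟨L₁, L, heq ▸ hL₁, hL, ?_⟩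
  -- telescoping identity: S₁ N + S N = f 0 + f (↑(d * p^N))
  have htel : ∀ N : ℕ, (∑ a ∈ Finset.range (d * p ^ N), (-1 : K) ^ a * f₁ (a : ℤ_[p]))
      + (∑ a ∈ Finset.range (d * p ^ N), (-1 : K) ^ a * f (a : ℤ_[p]))
      = f 0 + f ((d * p ^ N : ℕ) : ℤ_[p]) := by
    intro N
    set n : ℕ := d * p ^ N with hn
    have hnodd : Odd n := hd.mul hp.pow
    set G : ℕ → K := fun a => (-1 : K) ^ a * f (a : ℤ_[p]) with hG
    have hterm : ∀ a : ℕ, (-1 : K) ^ a * f₁ (a : ℤ_[p]) + (-1 : K) ^ a * f (a : ℤ_[p])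
        = -(G (a + 1) - G a) := by
      intro a
      have hcast : ((a : ℤ_[p]) + 1) = ((a + 1 : ℕ) : ℤ_[p]) := by push_cast; ring
      simp only [hG, hf₁def, hcast, pow_succ]
      ring
    rw [← Finset.sum_add_distrib]
    simp only [hterm]
    rw [Finset.sum_neg_distrib, Finset.sum_range_sub]
    simp only [hG, pow_zero, one_mul, Nat.cast_zero, hnodd.neg_one_pow]
    ring
  have htend2 : Tendsto (fun N : ℕ => f 0 + f ((d * p ^ N : ℕ) : ℤ_[p])) atTop
      (nhds (f 0 + f 0)) := by
    apply Tendsto.const_add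
    have hplt : ‖(p : ℤ_[p])‖ < 1 := by
      rw [PadicInt.norm_p]
      have hp1 : 1 < (p : ℝ) := by exact_mod_cast (Fact.out : p.Prime).one_lt
      rw [inv_lt_one_iff₀]; right; exact hp1
    have h1 : Tendsto (fun N : ℕ => ((d * p ^ N : ℕ) : ℤ_[p])) atTop (nhds 0) := by
      have h2 : Tendsto (fun N : ℕ => (d : ℤ_[p]) * (p : ℤ_[p]) ^ N) atTop
          (nhds ((d : ℤ_[p]) * 0)) :=
        (tendsto_pow_atTop_nhds_zero_of_norm_lt_one hplt).const_mul _
      rw [mul_zero] at h2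
      convert h2 using 2 with N
      push_cast; ring
    exact (hf.tendsto 0).comp h1
  have hsum : Tendsto (fun N : ℕ =>
      (∑ a ∈ Finset.range (d * p ^ N), (-1 : K) ^ a * f₁ (a : ℤ_[p]))
      + (∑ a ∈ Finset.range (d * p ^ N), (-1 : K) ^ a * f (a : ℤ_[p]))) atTop
      (nhds (L₁ + L)) := hL₁.add hL
  have : L₁ + L = f 0 + f 0 := by
    apply tendsto_nhds_unique hsum
    simpa only [htel] using htend2
  rw [this]; ring
end

section
/- Let p be an odd prime, d an odd positive integer, f : ℤ_p → K a continuous function, and n a positive integer; let f_n(t) = f(t+n). Then I₋₁(f_n) and I₋₁(f) exist and satisfy I₋₁(f_n) = (−1)^n I₋₁(f) + 2 Σ_{j=0}^{n−1} (−1)^{n−1−j} f(j). -/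
open Filter Finset IsUltrametricDist

section aux

variable {p : ℕ} [hpp : Fact p.Prime] {K : Type*} [NontriviallyNormedField K]
  [CompleteSpace K] [IsUltrametricDist K]

set_option linter.unusedSectionVars false

private lemma sum_range_mul_decomp {M q : ℕ} (F : ℕ → K) :
    ∑ a ∈ range (M * q), F a = ∑ j ∈ range q, ∑ i ∈ range M, F (M * j + i) := by
  induction q with
  | zero => simp
  | succ q ih =>
    rw [Nat.mul_succ, Finset.sum_range_add, ih, Finset.sum_range_succ]

private noncomputable def S (d : ℕ) (g : ℤ_[p] → K) (N : ℕ) : K :=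
  ∑ a ∈ range (d * p ^ N), (-1 : K) ^ a * g (a : ℤ_[p])

private lemma norm_nat_mul_le (d k j : ℕ) :
    ‖((d * p ^ k * j : ℕ) : ℤ_[p])‖ ≤ ((p : ℝ)⁻¹) ^ k := by
  push_cast
  rw [norm_mul, norm_mul]
  calc ‖(d : ℤ_[p])‖ * ‖(p : ℤ_[p]) ^ k‖ * ‖(j : ℤ_[p])‖
      ≤ 1 * ‖(p : ℤ_[p]) ^ k‖ * 1 := by
        gcongr <;> exact PadicInt.norm_le_one _
    _ = ((p : ℝ)⁻¹) ^ k := by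
        rw [one_mul, mul_one, PadicInt.norm_p_pow, zpow_neg, zpow_natCast, inv_pow]

private lemma step_bound (hp : Odd p) {d : ℕ} (hd : Odd d) (g : ℤ_[p] → K) (k : ℕ)
    {ε : ℝ} (hε : 0 ≤ ε)
    (hcont : ∀ x y : ℤ_[p], ‖x - y‖ ≤ ((p : ℝ)⁻¹) ^ k → ‖g x - g y‖ ≤ ε) :
    ‖S d g (k + 1) - S d g k‖ ≤ ε := by
  set M := d * p ^ k with hM
  have hModd : Odd M := hd.mul (hp.pow)
  have h1 : S d g (k + 1) = ∑ j ∈ range p, ∑ i ∈ range M,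
      (-1 : K) ^ j * ((-1 : K) ^ i * g ((M * j + i : ℕ) : ℤ_[p])) := by
    rw [S, show d * p ^ (k + 1) = M * p by rw [hM]; ring, sum_range_mul_decomp]
    refine Finset.sum_congr rfl fun j _ => Finset.sum_congr rfl fun i _ => ?_
    rw [pow_add, pow_mul, hModd.neg_one_pow]
    ring
  have hps : (∑ j ∈ range p, (-1 : K) ^ j) = 1 := by
    rw [neg_one_geom_sum, if_neg (Nat.not_even_iff_odd.mpr hp)]
  have h2 : S d g (k + 1) - S d g k = ∑ i ∈ range M, (-1 : K) ^ i *
      ∑ j ∈ range p, (-1 : K) ^ j * (g ((M * j + i : ℕ) : ℤ_[p]) - g (i : ℤ_[p])) := by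
    rw [h1, Finset.sum_comm, S, ← hM, ← Finset.sum_sub_distrib]
    refine Finset.sum_congr rfl fun i _ => ?_
    have hci : (-1 : K) ^ i * g ((i : ℕ) : ℤ_[p]) =
        ∑ j ∈ range p, (-1 : K) ^ j * ((-1 : K) ^ i * g ((i : ℕ) : ℤ_[p])) := by
      rw [← Finset.sum_mul, hps, one_mul]
    rw [hci, ← Finset.sum_sub_distrib, Finset.mul_sum]
    exact Finset.sum_congr rfl fun j _ => by ring
  rw [h2]
  refine norm_sum_le_of_forall_le_of_nonneg hε fun i _ => ?_
  have hn1 : ∀ m : ℕ, ‖(-1 : K) ^ m‖ = 1 := fun m => by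
    rw [norm_pow, norm_neg, norm_one, one_pow]
  rw [norm_mul, hn1, one_mul]
  refine norm_sum_le_of_forall_le_of_nonneg hε fun j _ => ?_
  rw [norm_mul, hn1, one_mul]
  refine hcont _ _ ?_
  have : ((M * j + i : ℕ) : ℤ_[p]) - (i : ℕ) = ((M * j : ℕ) : ℤ_[p]) := by
    push_cast; ring
  rw [this, hM]
  exact norm_nat_mul_le d k j

private lemma conv (hp : Odd p) {d : ℕ} (hd : Odd d) (g : ℤ_[p] → K)
    (hg : Continuous g) : ∃ L, Tendsto (S d g) atTop (nhds L) := by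
  apply cauchySeq_tendsto_of_complete
  rw [Metric.cauchySeq_iff']
  intro ε hε
  have hucont : UniformContinuous g := CompactSpace.uniformContinuous_of_continuous hg
  obtain ⟨δ, hδ, hδ'⟩ := Metric.uniformContinuous_iff.mp hucont (ε / 2) (by positivity)
  have hp1 : (1 : ℝ) < p := by
    exact_mod_cast hpp.out.one_lt
  have htend : Tendsto (fun k : ℕ => ((p : ℝ)⁻¹) ^ k) atTop (nhds 0) :=
    tendsto_pow_atTop_nhds_zero_of_lt_one (by positivity) (by
      rw [inv_lt_one_iff₀]; right; exact hp1)
  obtain ⟨K₀, hK₀⟩ := (htend.eventually (gt_mem_nhds hδ)).exists_forall_of_atTop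
  have hcont : ∀ k ≥ K₀, ∀ x y : ℤ_[p], ‖x - y‖ ≤ ((p : ℝ)⁻¹) ^ k →
      ‖g x - g y‖ ≤ ε / 2 := by
    intro k hk x y hxy
    have : dist x y < δ := by
      rw [dist_eq_norm]
      exact lt_of_le_of_lt hxy (hK₀ k hk)
    have := hδ' this
    rw [dist_eq_norm] at this
    exact this.le
  refine ⟨K₀, fun n hn => ?_⟩
  have key : ∀ m : ℕ, ‖S d g (K₀ + m) - S d g K₀‖ ≤ ε / 2 := by
    intro m
    induction m with
    | zero => simp [half_pos hε |>.le]
    | succ m ih =>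
      have h1 : S d g (K₀ + (m + 1)) - S d g K₀ =
          (S d g ((K₀ + m) + 1) - S d g (K₀ + m)) + (S d g (K₀ + m) - S d g K₀) := by
        rw [show K₀ + (m + 1) = (K₀ + m) + 1 by ring]; ring
      rw [h1]
      refine (norm_add_le_max _ _).trans (max_le ?_ ih)
      exact step_bound hp hd g (K₀ + m) (half_pos hε).le
        (hcont (K₀ + m) (Nat.le_add_right _ _))
  have := key (n - K₀)
  rw [Nat.add_sub_cancel' hn] at this
  rw [dist_eq_norm]
  exact lt_of_le_of_lt this (by linarith)

private lemma shift_identity (g : ℤ_[p] → K) (M : ℕ) :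
    ∑ a ∈ range M, (-1 : K) ^ a * g ((a + 1 : ℕ) : ℤ_[p]) =
      -∑ a ∈ range M, (-1 : K) ^ a * g ((a : ℕ) : ℤ_[p])
        - (-1 : K) ^ M * g ((M : ℕ) : ℤ_[p]) + g 0 := by
  induction M with
  | zero => simp
  | succ M ih =>
    rw [Finset.sum_range_succ, Finset.sum_range_succ, ih, pow_succ]
    ring

private lemma tendsto_dpN_zero {d : ℕ} :
    Tendsto (fun N : ℕ => ((d * p ^ N : ℕ) : ℤ_[p])) atTop (nhds 0) := by
  have hp1 : (1 : ℝ) < p := by exact_mod_cast hpp.out.one_lt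
  have htend : Tendsto (fun k : ℕ => ((p : ℝ)⁻¹) ^ k) atTop (nhds 0) :=
    tendsto_pow_atTop_nhds_zero_of_lt_one (by positivity) (by
      rw [inv_lt_one_iff₀]; right; exact hp1)
  refine squeeze_zero_norm (fun N => ?_) htend
  simpa using norm_nat_mul_le (p := p) d N 1

private lemma shift_one (hp : Odd p) {d : ℕ} (hd : Odd d) (g : ℤ_[p] → K)
    (hg : Continuous g) {L : K} (hL : Tendsto (S d g) atTop (nhds L)) :
    Tendsto (S d (fun t => g (t + 1))) atTop (nhds (-L + 2 * g 0)) := by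
  have heq : ∀ N, S d (fun t => g (t + 1)) N =
      -S d g N + g ((d * p ^ N : ℕ) : ℤ_[p]) + g 0 := by
    intro N
    have hModd : Odd (d * p ^ N) := hd.mul (hp.pow)
    have : S d (fun t => g (t + 1)) N =
        ∑ a ∈ range (d * p ^ N), (-1 : K) ^ a * g ((a + 1 : ℕ) : ℤ_[p]) := by
      refine Finset.sum_congr rfl fun a _ => ?_
      push_cast
      ring_nf
    rw [this, shift_identity, hModd.neg_one_pow, S]
    ring
  have htg : Tendsto (fun N => g ((d * p ^ N : ℕ) : ℤ_[p])) atTop (nhds (g 0)) :=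
    (hg.tendsto 0).comp tendsto_dpN_zero
  have h : Tendsto (fun N => -S d g N + g ((d * p ^ N : ℕ) : ℤ_[p]) + g 0) atTop
      (nhds (-L + g 0 + g 0)) := ((hL.neg.add htg).add tendsto_const_nhds)
  have : -L + g 0 + g 0 = -L + 2 * g 0 := by ring
  rw [this] at h
  exact h.congr (fun N => (heq N).symm)

end aux

/-- For a continuous `f : ℤ_p → K`, a positive integer `n`, and
`f_n(t) = f(t+n)`, both fermionic `p`-adic integrals `I₋₁(f_n)` and `I₋₁(f)` exist and
`I₋₁(f_n) = (−1)^n I₋₁(f) + 2 ∑_{j=0}^{n−1} (−1)^{n−1−j} f(j)`. -/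
theorem fermionic_integral_shift
    {p : ℕ} [Fact p.Prime] (hp : Odd p)
    {K : Type*} [NontriviallyNormedField K] [CompleteSpace K] [IsUltrametricDist K]
    [Algebra ℚ_[p] K] (halg : ∀ x : ℚ_[p], ‖algebraMap ℚ_[p] K x‖ = ‖x‖)
    {d : ℕ} (hd : Odd d) (hdpos : 0 < d)
    (f : ℤ_[p] → K) (hf : Continuous f) (n : ℕ) (hn : 0 < n) :
    ∃ Ln L : K,
      Tendsto (fun N : ℕ => ∑ a ∈ Finset.range (d * p ^ N),
          (-1 : K) ^ a * f ((a : ℤ_[p]) + (n : ℤ_[p]))) atTop (nhds Ln) ∧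
      Tendsto (fun N : ℕ => ∑ a ∈ Finset.range (d * p ^ N),
          (-1 : K) ^ a * f (a : ℤ_[p])) atTop (nhds L) ∧
      Ln = (-1 : K) ^ n * L +
        2 * ∑ j ∈ Finset.range n, (-1 : K) ^ (n - 1 - j) * f (j : ℤ_[p]) := by
  obtain ⟨L, hL⟩ := conv hp hd f hf
  have key : ∀ k : ℕ, Tendsto (S d (fun t => f (t + (k : ℤ_[p])))) atTop
      (nhds ((-1 : K) ^ k * L +
        2 * ∑ j ∈ Finset.range k, (-1 : K) ^ (k - 1 - j) * f (j : ℤ_[p]))) := by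
    intro k
    induction k with
    | zero =>
      simpa using hL
    | succ k ih =>
      have hcg : Continuous (fun t : ℤ_[p] => f (t + (k : ℤ_[p]))) :=
        hf.comp (continuous_id.add continuous_const)
      have h := shift_one hp hd _ hcg ih
      have hfun : (fun t : ℤ_[p] => f (t + 1 + (k : ℤ_[p]))) =
          (fun t : ℤ_[p] => f (t + ((k + 1 : ℕ) : ℤ_[p]))) := by
        funext t; push_cast; ring_nf
      rw [hfun] at h
      convert h using 2
      have h0 : f ((0 : ℤ_[p]) + (k : ℤ_[p])) = f ((k : ℕ) : ℤ_[p]) := by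
        rw [zero_add]
      rw [h0]
      rw [Finset.sum_range_succ]
      have hs : ∀ j ∈ Finset.range k, (-1 : K) ^ (k + 1 - 1 - j) * f (j : ℤ_[p]) =
          -((-1 : K) ^ (k - 1 - j) * f (j : ℤ_[p])) := by
        intro j hj
        rw [Finset.mem_range] at hj
        have : k + 1 - 1 - j = (k - 1 - j) + 1 := by omega
        rw [this, pow_succ]
        ring
      rw [Finset.sum_congr rfl hs, Finset.sum_neg_distrib]
      have : k + 1 - 1 - k = 0 := by omega
      rw [this, pow_succ, pow_zero]
      ring
  exact ⟨_, L, key n, hL, rfl⟩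
end

section
/- Let p be an odd prime and let w ∈ K satisfy w^{p^m} = 1 for some integer m ≥ 0. Then for every integer n ≥ 0 the twisted Euler number E_{n,w} := lim_{N→∞} Σ_{a=0}^{p^N−1} (−1)^a w^a a^n exists in K (Witt's formula E_{n,w} = ∫_{ℤ_p} t^n w^t dμ₋₁(t)), and these numbers satisfy, for every n ≥ 0, w · Σ_{j=0}^{n} C(n,j) E_{j,w} + E_{n,w} = 2 if n = 0 and = 0 if n ≥ 1 (equivalently, Σ_{n≥0} E_{n,w} z^n/n! = 2/(w e^z + 1) as a generating-function identity). -/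
open Filter

private lemma aux_sum_split {M : Type*} [AddCommMonoid M] (f : ℕ → M) (d c : ℕ) :
    ∑ a ∈ Finset.range (c * d), f a
      = ∑ i ∈ Finset.range c, ∑ b ∈ Finset.range d, f (i * d + b) := by
  induction c with
  | zero => simp
  | succ c ih =>
      rw [Nat.succ_mul, Finset.sum_range_add, ih, Finset.sum_range_succ]

/-- For an odd prime `p` and `w ∈ K` with `w^{p^m} = 1`, the twisted
Euler numbers `E_{n,w} = lim_N ∑_{a<p^N} (−1)^a w^a a^n` exist (Witt's formula), and
satisfy `w · ∑_{j≤n} C(n,j) E_{j,w} + E_{n,w} = 2` if `n = 0` and `= 0` if `n ≥ 1`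
(the coefficient form of `∑ E_{n,w} z^n/n! = 2/(w e^z + 1)`). -/
theorem twisted_euler_numbers_exist_and_recurrence
    {p : ℕ} [Fact p.Prime] (hp : Odd p)
    {K : Type*} [NontriviallyNormedField K] [CompleteSpace K] [IsUltrametricDist K]
    [Algebra ℚ_[p] K] (halg : ∀ x : ℚ_[p], ‖algebraMap ℚ_[p] K x‖ = ‖x‖)
    (w : K) (m : ℕ) (hw : w ^ p ^ m = 1) :
    ∃ E : ℕ → K,
      (∀ n : ℕ, Tendsto (fun N : ℕ => ∑ a ∈ Finset.range (p ^ N),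
          (-1 : K) ^ a * w ^ a * (a : K) ^ n) atTop (nhds (E n))) ∧
      (∀ n : ℕ, w * ∑ j ∈ Finset.range (n + 1), (n.choose j : K) * E j + E n
          = if n = 0 then 2 else 0) := by
  have hpp : p.Prime := Fact.out
  set S : ℕ → ℕ → K := fun n N => ∑ a ∈ Finset.range (p ^ N),
      (-1 : K) ^ a * w ^ a * (a : K) ^ n with hS
  -- norms of integers are ≤ 1
  have hint : ∀ k : ℤ, ‖(k : K)‖ ≤ 1 := by
    intro k
    rw [← map_intCast (algebraMap ℚ_[p] K) k, halg]
    exact Padic.norm_int_le_one k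
  have hnat : ∀ k : ℕ, ‖(k : K)‖ ≤ 1 := by
    intro k
    simpa using hint (k : ℤ)
  have hwnorm : ‖w‖ = 1 := by
    have h : ‖w‖ ^ (p ^ m) = 1 := by rw [← norm_pow, hw, norm_one]
    have h2 := pow_eq_one_iff_cases.mp h
    rcases h2 with h2 | h2 | h2
    · exact absurd h2 (pow_ne_zero m hpp.ne_zero)
    · exact h2
    · nlinarith [norm_nonneg w, h2.2]
  have hpK : ‖(p : K)‖ = (p : ℝ)⁻¹ := by
    rw [← map_natCast (algebraMap ℚ_[p] K) p, halg]
    exact Padic.norm_p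
  have hq0 : (0 : ℝ) ≤ (p : ℝ)⁻¹ := by positivity
  have hq1 : (p : ℝ)⁻¹ < 1 := by
    rw [inv_lt_one₀ (by exact_mod_cast hpp.pos)]
    exact_mod_cast hpp.one_lt
  -- each term has norm ≤ 1
  have hterm : ∀ n a : ℕ, ‖(-1 : K) ^ a * w ^ a * (a : K) ^ n‖ ≤ 1 := by
    intro n a
    rw [norm_mul, norm_mul, norm_pow, norm_pow, norm_pow, norm_neg, norm_one, one_pow,
      hwnorm, one_pow, one_mul, one_mul]
    exact pow_le_one₀ (norm_nonneg _) (hnat a)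
  have hSnorm : ∀ n N, ‖S n N‖ ≤ 1 :=
    fun n N => IsUltrametricDist.norm_sum_le_of_forall_le_of_nonneg zero_le_one
      (fun a _ => hterm n a)
  -- w ^ (p ^ N) = 1 for N ≥ m
  have hwN : ∀ N, m ≤ N → w ^ p ^ N = 1 := by
    intro N hN
    have : p ^ N = p ^ m * p ^ (N - m) := by
      rw [← pow_add]; congr 1; omega
    rw [this, pow_mul, hw, one_pow]
  -- (-1)^(p^N) = -1
  have hneg : ∀ N : ℕ, (-1 : K) ^ p ^ N = -1 := fun N => (hp.pow).neg_one_pow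
  -- key difference bound
  have hdiff : ∀ n N, m ≤ N → ‖S n (N + 1) - S n N‖ ≤ (p : ℝ)⁻¹ ^ N := by
    intro n N hN
    have hsplit : S n (N + 1) = ∑ i ∈ Finset.range p, (-1 : K) ^ i *
        ∑ b ∈ Finset.range (p ^ N), (-1 : K) ^ b * w ^ b * ((i * p ^ N + b : ℕ) : K) ^ n := by
      rw [hS]
      simp only [pow_succ, mul_comm (p ^ N) p]
      rw [aux_sum_split (fun a => (-1 : K) ^ a * w ^ a * (a : K) ^ n) (p ^ N) p]
      refine Finset.sum_congr rfl fun i _ => ?_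
      rw [Finset.mul_sum]
      refine Finset.sum_congr rfl fun b _ => ?_
      have h1 : (-1 : K) ^ (i * p ^ N + b) = (-1 : K) ^ i * (-1 : K) ^ b := by
        rw [pow_add, pow_mul', hneg]
      have h2 : w ^ (i * p ^ N + b) = w ^ b := by
        rw [pow_add, pow_mul', hwN N hN, one_pow, one_mul]
      rw [h1, h2]; ring
    have hgeom : ∑ i ∈ Finset.range p, (-1 : K) ^ i = 1 := by
      rw [neg_one_geom_sum, if_neg (Nat.not_even_iff_odd.mpr hp)]
    have hSN : S n N = ∑ i ∈ Finset.range p, (-1 : K) ^ i * S n N := by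
      rw [← Finset.sum_mul, hgeom, one_mul]
    rw [hsplit]
    rw [hSN]
    rw [← Finset.sum_sub_distrib]
    refine IsUltrametricDist.norm_sum_le_of_forall_le_of_nonneg (by positivity)
      (fun i _ => ?_)
    rw [← mul_sub]
    rw [norm_mul, norm_pow, norm_neg, norm_one, one_pow, one_mul]
    rw [hS]
    simp only
    rw [← Finset.sum_sub_distrib]
    refine IsUltrametricDist.norm_sum_le_of_forall_le_of_nonneg (by positivity)
      (fun b _ => ?_)
    have : (-1 : K) ^ b * w ^ b * ((i * p ^ N + b : ℕ) : K) ^ n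
        - (-1 : K) ^ b * w ^ b * (b : K) ^ n
        = (-1 : K) ^ b * w ^ b * (((i * p ^ N + b : ℕ) : K) ^ n - (b : K) ^ n) := by ring
    rw [this, norm_mul, norm_mul, norm_pow, norm_pow, norm_neg, norm_one, one_pow,
      hwnorm, one_pow, one_mul, one_mul]
    -- divisibility
    obtain ⟨k, hk⟩ : ((p : ℤ) ^ N) ∣ ((i * p ^ N + b : ℕ) : ℤ) ^ n - ((b : ℕ) : ℤ) ^ n := by
      refine dvd_trans ⟨(i : ℤ), ?_⟩ (sub_dvd_pow_sub_pow _ _ n)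
      push_cast; ring
    have hcast : ((i * p ^ N + b : ℕ) : K) ^ n - (b : K) ^ n = (p : K) ^ N * (k : K) := by
      have := congrArg (fun z : ℤ => (z : K)) hk
      push_cast at this
      convert this using 2 <;> push_cast <;> ring
    rw [hcast, norm_mul, norm_pow, hpK]
    calc (p : ℝ)⁻¹ ^ N * ‖(k : K)‖ ≤ (p : ℝ)⁻¹ ^ N * 1 := by
          exact mul_le_mul_of_nonneg_left (hint k) (by positivity)
      _ = (p : ℝ)⁻¹ ^ N := mul_one _
  -- Cauchy sequence
  have hcauchy : ∀ n, CauchySeq (S n) := by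
    intro n
    refine cauchySeq_of_dist_le_of_summable (fun N => 2 * (p : ℝ) ^ m * (p : ℝ)⁻¹ ^ N) ?_ ?_
    · intro N
      rw [dist_eq_norm]
      rcases le_or_gt m N with hN | hN
      · calc ‖S n N - S n (N + 1)‖ = ‖S n (N + 1) - S n N‖ := norm_sub_rev _ _
          _ ≤ (p : ℝ)⁻¹ ^ N := hdiff n N hN
          _ ≤ 2 * (p : ℝ) ^ m * (p : ℝ)⁻¹ ^ N := by
              nlinarith [pow_nonneg hq0 N, one_le_pow₀ (by exact_mod_cast hpp.one_le : (1:ℝ) ≤ p) (n := m)]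
      · have h1 : ‖S n N - S n (N + 1)‖ ≤ 2 := by
          calc ‖S n N - S n (N + 1)‖ ≤ ‖S n N‖ + ‖S n (N + 1)‖ := norm_sub_le _ _
            _ ≤ 2 := by linarith [hSnorm n N, hSnorm n (N + 1)]
        have h2 : (1 : ℝ) ≤ (p : ℝ) ^ m * (p : ℝ)⁻¹ ^ N := by
          rw [inv_pow, ← div_eq_mul_inv, one_le_div (pow_pos (by exact_mod_cast hpp.pos) N)]
          exact pow_le_pow_right₀ (by exact_mod_cast hpp.one_le) hN.le
        nlinarith
    · exact (summable_geometric_of_lt_one hq0 hq1).mul_left _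
  choose E hE using fun n => cauchySeq_tendsto_of_complete (hcauchy n)
  refine ⟨E, hE, fun n => ?_⟩
  -- limit of the LHS
  have h1 : Tendsto (fun N => w * ∑ j ∈ Finset.range (n + 1), (n.choose j : K) * S j N + S n N)
      atTop (nhds (w * ∑ j ∈ Finset.range (n + 1), (n.choose j : K) * E j + E n)) := by
    exact ((tendsto_finset_sum _ fun j _ => (hE j).const_mul _).const_mul w).add (hE n)
  -- finite-level identity
  have h2 : ∀ N, m ≤ N →
      w * ∑ j ∈ Finset.range (n + 1), (n.choose j : K) * S j N + S n N
        = (if n = 0 then 1 else 0) + ((p ^ N : ℕ) : K) ^ n := by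
    intro N hN
    have hbin : ∑ j ∈ Finset.range (n + 1), (n.choose j : K) * S j N
        = ∑ a ∈ Finset.range (p ^ N), (-1 : K) ^ a * w ^ a * ((a : K) + 1) ^ n := by
      rw [hS]
      simp only [Finset.mul_sum]
      rw [Finset.sum_comm]
      refine Finset.sum_congr rfl fun a _ => ?_
      rw [add_pow]
      simp only [one_pow, mul_one, Finset.mul_sum]
      refine Finset.sum_congr rfl fun j _ => ?_
      ring
    set g : ℕ → K := fun b => (-1 : K) ^ b * w ^ b * (b : K) ^ n with hg
    have hshift : w * ∑ j ∈ Finset.range (n + 1), (n.choose j : K) * S j N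
        = -∑ a ∈ Finset.range (p ^ N), g (a + 1) := by
      rw [hbin, Finset.mul_sum, ← Finset.sum_neg_distrib]
      refine Finset.sum_congr rfl fun a _ => ?_
      rw [hg]
      push_cast
      ring
    have hsum : ∑ a ∈ Finset.range (p ^ N), g (a + 1)
        = S n N + g (p ^ N) - g 0 := by
      have := Finset.sum_range_succ' g (p ^ N)
      rw [Finset.sum_range_succ g (p ^ N)] at this
      have hSg : S n N = ∑ b ∈ Finset.range (p ^ N), g b := rfl
      rw [hSg]
      linear_combination -this
    rw [hshift, hsum]
    have hg0 : g 0 = if n = 0 then 1 else 0 := by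
      simp only [hg]; simp [zero_pow_eq]
    have hgp : g (p ^ N) = -((p ^ N : ℕ) : K) ^ n := by
      simp only [hg]
      rw [hneg N, hwN N hN]
      ring
    rw [hg0, hgp]
    ring
  -- limit of the RHS
  have h3 : Tendsto (fun N : ℕ => (if n = 0 then (1 : K) else 0) + ((p ^ N : ℕ) : K) ^ n)
      atTop (nhds (if n = 0 then 2 else 0)) := by
    rcases eq_or_ne n 0 with rfl | hn
    · simp only [if_pos rfl, pow_zero]
      exact tendsto_const_nhds.congr (by norm_num)
    · simp only [if_neg hn]
      have hx : ‖(p : K) ^ n‖ < 1 := by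
        rw [norm_pow, hpK]
        calc (p : ℝ)⁻¹ ^ n ≤ (p : ℝ)⁻¹ ^ 1 :=
              pow_le_pow_of_le_one hq0 hq1.le (by omega)
          _ < 1 := by simpa using hq1
      have := tendsto_pow_atTop_nhds_zero_of_norm_lt_one hx
      have h4 : Tendsto (fun N : ℕ => ((p ^ N : ℕ) : K) ^ n) atTop (nhds 0) := by
        refine this.congr fun N => ?_
        push_cast
        rw [← pow_mul, ← pow_mul, mul_comm]
      simpa using (tendsto_const_nhds (x := (0:K))).add h4
  have h5 : Tendsto (fun N => w * ∑ j ∈ Finset.range (n + 1), (n.choose j : K) * S j N + S n N)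
      atTop (nhds (if n = 0 then 2 else 0)) := by
    refine h3.congr' ?_
    filter_upwards [eventually_ge_atTop m] with N hN
    exact (h2 N hN).symm
  exact tendsto_nhds_unique h1 h5
end

section
/- Let p be an odd prime, d an odd positive integer, χ a Dirichlet character modulo d with values in K, and w ∈ K with w^{p^m} = 1 for some integer m ≥ 0. Then for every integer n ≥ 0 the generalized twisted Euler number E_{n,w,χ} := lim_{N→∞} Σ_{a=0}^{dp^N−1} (−1)^a χ(a) w^a a^n exists in K (Witt's formula E_{n,w,χ} = ∫_X χ(t) t^n w^t dμ₋₁(t)), and these numbers satisfy, for every n ≥ 0, w^d · Σ_{j=0}^{n} C(n,j) d^{n−j} E_{j,w,χ} + E_{n,w,χ} = 2 Σ_{i=0}^{d−1} (−1)^i χ(i) w^i i^n (the coefficient form of the generating-function identity Σ_{n≥0} E_{n,w,χ} z^n/n! = 2 Σ_{i} (−1)^i χ(i) w^i e^{iz}/(w^d e^{dz} + 1)). -/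
open Filter

noncomputable def auxE {K : Type*} [Field K] (c wd dK : K) (R : ℕ → K) : ℕ → K
  | n => c * (R n - wd * ∑ j ∈ (Finset.range n).attach,
      (n.choose j.1 : K) * dK ^ (n - j.1) * auxE c wd dK R j.1)
decreasing_by exact Finset.mem_range.mp j.2

theorem auxE_def {K : Type*} [Field K] (c wd dK : K) (R : ℕ → K) (n : ℕ) :
    auxE c wd dK R n = c * (R n - wd * ∑ j ∈ Finset.range n,
      (n.choose j : K) * dK ^ (n - j) * auxE c wd dK R j) := by
  rw [auxE]
  congr 1
  rw [← Finset.sum_attach (Finset.range n)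
    (fun j => (n.choose j : K) * dK ^ (n - j) * auxE c wd dK R j)]

/-- For an odd prime `p`, an odd positive integer `d`, a Dirichlet
character `χ` modulo `d` with values in `K`, and `w ∈ K` with `w^{p^m} = 1`, the
generalized twisted Euler numbers `E_{n,w,χ} = lim_N ∑_{a<dp^N} (−1)^a χ(a) w^a a^n`
exist (Witt's formula), and satisfy, for every `n ≥ 0`,
`w^d · ∑_{j≤n} C(n,j) d^{n−j} E_{j,w,χ} + E_{n,w,χ} = 2 ∑_{i<d} (−1)^i χ(i) w^i i^n`. -/
theorem generalized_twisted_euler_numbers_exist_and_recurrence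
    {p : ℕ} [Fact p.Prime] (hp : Odd p)
    {K : Type*} [NontriviallyNormedField K] [CompleteSpace K] [IsUltrametricDist K]
    [Algebra ℚ_[p] K] (halg : ∀ x : ℚ_[p], ‖algebraMap ℚ_[p] K x‖ = ‖x‖)
    {d : ℕ} (hd : Odd d) (hdpos : 0 < d)
    (χ : ℤ → K) (hχper : ∀ a : ℤ, χ (a + d) = χ a)
    (hχmul : ∀ a b : ℤ, χ (a * b) = χ a * χ b) (hχone : χ 1 = 1)
    (hχzero : ∀ a : ℤ, 1 < Int.gcd a d → χ a = 0)
    (w : K) (m : ℕ) (hw : w ^ p ^ m = 1) :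
    ∃ E : ℕ → K,
      (∀ n : ℕ, Tendsto (fun N : ℕ => ∑ a ∈ Finset.range (d * p ^ N),
          (-1 : K) ^ a * χ (a : ℤ) * w ^ a * (a : K) ^ n) atTop (nhds (E n))) ∧
      (∀ n : ℕ, w ^ d * ∑ j ∈ Finset.range (n + 1),
            (n.choose j : K) * (d : K) ^ (n - j) * E j + E n
          = 2 * ∑ i ∈ Finset.range d, (-1 : K) ^ i * χ (i : ℤ) * w ^ i * (i : K) ^ n) := by
  -- char zero
  have hchar : CharZero K := charZero_of_injective_algebraMap (algebraMap ℚ_[p] K).injective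
  -- w^d + 1 ≠ 0
  have hwd : w ^ d + 1 ≠ 0 := by
    intro h
    have hw1 : w ^ d = -1 := by linear_combination h
    have h2 : ((-1 : K)) ^ (p ^ m) = 1 := by
      calc ((-1 : K)) ^ (p ^ m) = (w ^ d) ^ (p ^ m) := by rw [hw1]
        _ = (w ^ p ^ m) ^ d := by rw [← pow_mul, ← pow_mul, mul_comm]
        _ = 1 := by rw [hw, one_pow]
    rw [(hp.pow).neg_one_pow] at h2
    have : (2 : K) = 0 := by linear_combination -h2
    exact two_ne_zero this
  -- notation
  set g : ℕ → ℕ → K := fun n a => (-1 : K) ^ a * χ (a : ℤ) * w ^ a * (a : K) ^ n with hg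
  set f : ℕ → ℕ → K := fun n N => ∑ a ∈ Finset.range (d * p ^ N), g n a with hf
  set S : ℕ → K := fun n => ∑ i ∈ Finset.range d, g n i with hS
  set E : ℕ → K := auxE (w ^ d + 1)⁻¹ (w ^ d) (d : K) (fun n => 2 * S n) with hE
  -- periodicity for multiples
  have hper : ∀ (a : ℤ) (k : ℕ), χ (a + d * k) = χ a := by
    intro a k
    induction k with
    | zero => simp
    | succ k ih =>
      have h := hχper (a + d * k)
      calc χ (a + d * (k + 1)) = χ (a + d * k + d) := by ring_nf
        _ = χ (a + d * k) := h
        _ = χ a := ih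
  -- per-term expansion of g n (d + a)
  have hterm : ∀ (n a : ℕ), g n (d + a)
      = -(w ^ d * ∑ j ∈ Finset.range (n + 1),
          (n.choose j : K) * (d : K) ^ (n - j) * g j a) := by
    intro n a
    have hsign : ((-1 : K)) ^ (d + a) = -((-1 : K)) ^ a := by
      rw [pow_add, hd.neg_one_pow]; ring
    have hchi : χ ((d + a : ℕ) : ℤ) = χ (a : ℤ) := by
      push_cast
      rw [add_comm, ← mul_one (d : ℤ)]
      exact_mod_cast hper (a : ℤ) 1
    have hpow : (((d + a : ℕ)) : K) ^ n
        = ∑ j ∈ Finset.range (n + 1), (a : K) ^ j * (d : K) ^ (n - j) * (n.choose j : K) := by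
      push_cast
      rw [add_comm, add_pow]
    simp only [hg]
    rw [hsign, hchi, hpow, pow_add]
    rw [Finset.mul_sum, Finset.mul_sum, ← Finset.sum_neg_distrib]
    exact Finset.sum_congr rfl fun j _ => by ring
  -- Step B: expanded shifted sum
  have hB : ∀ (n N : ℕ), ∑ a ∈ Finset.range (d * p ^ N), g n (d + a)
      = -(w ^ d * ∑ j ∈ Finset.range (n + 1),
          (n.choose j : K) * (d : K) ^ (n - j) * f j N) := by
    intro n N
    calc ∑ a ∈ Finset.range (d * p ^ N), g n (d + a)
        = ∑ a ∈ Finset.range (d * p ^ N), -(w ^ d * ∑ j ∈ Finset.range (n + 1),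
            (n.choose j : K) * (d : K) ^ (n - j) * g j a) :=
          Finset.sum_congr rfl fun a _ => hterm n a
      _ = -(w ^ d * ∑ j ∈ Finset.range (n + 1),
            (n.choose j : K) * (d : K) ^ (n - j) * f j N) := by
          rw [Finset.sum_neg_distrib, ← Finset.mul_sum, Finset.sum_comm]
          congr 2
          refine Finset.sum_congr rfl fun j _ => ?_
          exact (Finset.mul_sum _ _ _).symm
  -- Step A: shift identity
  have hA : ∀ (n N : ℕ), ∑ a ∈ Finset.range (d * p ^ N), g n (d + a)
      = f n N + (∑ i ∈ Finset.range d, g n (d * p ^ N + i)) - ∑ i ∈ Finset.range d, g n i := by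
    intro n N
    have e2 : ∑ a ∈ Finset.range (d + d * p ^ N), g n a
        = (∑ a ∈ Finset.range d, g n a) + ∑ a ∈ Finset.range (d * p ^ N), g n (d + a) :=
      Finset.sum_range_add (g n) d (d * p ^ N)
    have e3 : ∑ a ∈ Finset.range (d * p ^ N + d), g n a
        = f n N + ∑ i ∈ Finset.range d, g n (d * p ^ N + i) :=
      Finset.sum_range_add (g n) (d * p ^ N) d
    rw [add_comm d (d * p ^ N)] at e2
    linear_combination e3 - e2
  -- key identity
  have key : ∀ (n N : ℕ), (w ^ d + 1) * f n N
      = S n - (∑ i ∈ Finset.range d, g n (d * p ^ N + i))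
        - w ^ d * ∑ j ∈ Finset.range n, (n.choose j : K) * (d : K) ^ (n - j) * f j N := by
    intro n N
    have hAB := (hA n N).symm.trans (hB n N)
    have hsplit : ∑ j ∈ Finset.range (n + 1), (n.choose j : K) * (d : K) ^ (n - j) * f j N
        = (∑ j ∈ Finset.range n, (n.choose j : K) * (d : K) ^ (n - j) * f j N) + f n N := by
      rw [Finset.sum_range_succ, Nat.choose_self, Nat.sub_self]
      push_cast
      ring
    rw [hsplit] at hAB
    have hSn : S n = ∑ i ∈ Finset.range d, g n i := rfl
    linear_combination hAB - hSn
  -- p tends to zero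
  have hpk : Tendsto (fun N : ℕ => (p : K) ^ N) atTop (nhds 0) := by
    apply tendsto_pow_atTop_nhds_zero_of_norm_lt_one
    have h1 : (p : K) = algebraMap ℚ_[p] K (p : ℚ_[p]) := by rw [map_natCast]
    rw [h1, halg]
    exact Padic.norm_p_lt_one
  have hwN : ∀ N, m ≤ N → w ^ (p ^ N) = 1 := by
    intro N hN
    have h : p ^ N = p ^ m * p ^ (N - m) := by rw [← pow_add, Nat.add_sub_cancel' hN]
    rw [h, pow_mul, hw, one_pow]
  -- tail limit
  have htail : ∀ n : ℕ, Tendsto (fun N => ∑ i ∈ Finset.range d, g n (d * p ^ N + i))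
      atTop (nhds (-S n)) := by
    intro n
    have hlim : ∀ i ∈ Finset.range d,
        Tendsto (fun N => g n (d * p ^ N + i)) atTop (nhds (-(g n i))) := by
      intro i _
      have hcast : Tendsto (fun N : ℕ => ((d * p ^ N + i : ℕ) : K)) atTop (nhds (i : K)) := by
        have h2 : Tendsto (fun N : ℕ => (d : K) * (p : K) ^ N + (i : K)) atTop
            (nhds ((d : K) * 0 + (i : K))) := (hpk.const_mul (d : K)).add tendsto_const_nhds
        have h3 : (fun N : ℕ => ((d * p ^ N + i : ℕ) : K))
            = fun N : ℕ => (d : K) * (p : K) ^ N + (i : K) := by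
          funext N; push_cast; ring
        rw [h3]
        simpa using h2
      have hmain : Tendsto
          (fun N : ℕ => -((-1 : K) ^ i * χ (i : ℤ) * w ^ i) * ((d * p ^ N + i : ℕ) : K) ^ n)
          atTop (nhds (-(g n i))) := by
        have h4 := (hcast.pow n).const_mul (-((-1 : K) ^ i * χ (i : ℤ) * w ^ i))
        convert h4 using 1
        simp only [hg]
        ring
      refine hmain.congr' ?_
      filter_upwards [eventually_ge_atTop m] with N hN
      have hsign : ((-1 : K)) ^ (d * p ^ N + i) = -((-1 : K)) ^ i := by
        rw [pow_add, (hd.mul (hp.pow)).neg_one_pow]; ring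
      have hchi : χ ((d * p ^ N + i : ℕ) : ℤ) = χ (i : ℤ) := by
        push_cast
        rw [add_comm]
        exact_mod_cast hper (i : ℤ) (p ^ N)
      have hwpow : w ^ (d * p ^ N + i) = w ^ i := by
        rw [pow_add, mul_comm d, pow_mul, hwN N hN, one_pow, one_mul]
      simp only [hg, hsign, hchi, hwpow]
      ring
    have h5 := tendsto_finset_sum (Finset.range d) hlim
    have h6 : ∑ i ∈ Finset.range d, -(g n i) = -S n := by
      rw [Finset.sum_neg_distrib]
    rwa [h6] at h5
  -- convergence by strong induction
  have conv : ∀ n : ℕ, Tendsto (fun N => f n N) atTop (nhds (E n)) := by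
    intro n
    induction n using Nat.strong_induction_on with
    | _ n ih =>
      have hrhs : Tendsto (fun N => (w ^ d + 1)⁻¹ *
          (S n - (∑ i ∈ Finset.range d, g n (d * p ^ N + i))
            - w ^ d * ∑ j ∈ Finset.range n, (n.choose j : K) * (d : K) ^ (n - j) * f j N))
          atTop (nhds ((w ^ d + 1)⁻¹ * (S n - (-S n)
            - w ^ d * ∑ j ∈ Finset.range n, (n.choose j : K) * (d : K) ^ (n - j) * E j))) := by
        apply Tendsto.const_mul
        refine Tendsto.sub (Tendsto.sub tendsto_const_nhds (htail n)) ?_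
        apply Tendsto.const_mul
        refine tendsto_finset_sum _ fun j hj => ?_
        exact (ih j (Finset.mem_range.mp hj)).const_mul _
      have heq : E n = (w ^ d + 1)⁻¹ * (S n - (-S n)
          - w ^ d * ∑ j ∈ Finset.range n, (n.choose j : K) * (d : K) ^ (n - j) * E j) := by
        rw [hE, auxE_def, show S n - -S n = 2 * S n from by ring]
      rw [← heq] at hrhs
      refine hrhs.congr fun N => ?_
      rw [← key n N, inv_mul_cancel_left₀ hwd]
  -- final recurrence
  have req : ∀ n : ℕ, w ^ d * ∑ j ∈ Finset.range (n + 1),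
      (n.choose j : K) * (d : K) ^ (n - j) * E j + E n = 2 * S n := by
    intro n
    have h1 : (w ^ d + 1) * E n
        = 2 * S n - w ^ d * ∑ j ∈ Finset.range n, (n.choose j : K) * (d : K) ^ (n - j) * E j := by
      rw [hE, auxE_def, mul_inv_cancel_left₀ hwd]
    rw [Finset.sum_range_succ, Nat.choose_self, Nat.sub_self]
    push_cast
    linear_combination h1
  exact ⟨E, conv, req⟩
end

section
/- The series Σ_{k=0}^{∞} (−1)^k w^k q^{hk} [k+x]_q^n converges absolutely; for each 0 ≤ j ≤ n one has 1 + w q^{h+j} ≠ 0; and the closed-form evaluation [2]_q · Σ_{k=0}^{∞} (−1)^k w^k q^{hk} [k+x]_q^n = ([2]_q/(1−q)^n) · Σ_{j=0}^{n} C(n,j) (−1)^j q^{xj} / (1 + w q^{h+j}) holds (i.e. the twisted (h,q)-Euler polynomial E^{(h)}_{n,q,w}(x) equals its finite closed form). -/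
/-- For `q ∈ ℂ` with `0 < |q| < 1`, `|w| ≤ 1`, and integers `h ≥ 1`,
`n ≥ 0`, `x ≥ 0`: the series `∑_k (−1)^k w^k q^{hk} [k+x]_q^n` converges absolutely,
each denominator `1 + w q^{h+j}` (for `0 ≤ j ≤ n`) is nonzero, and the twisted
`(h,q)`-Euler polynomial `E^{(h)}_{n,q,w}(x)` equals its finite closed form. -/
theorem twisted_hq_euler_polynomial_closed_form
    (q w : ℂ) (hq0 : q ≠ 0) (hq : ‖q‖ < 1) (hw : ‖w‖ ≤ 1)
    (h : ℕ) (hh : 1 ≤ h) (n x : ℕ) :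
    Summable (fun k : ℕ =>
        ‖(-1 : ℂ) ^ k * w ^ k * q ^ (h * k) * ((1 - q ^ (k + x)) / (1 - q)) ^ n‖) ∧
    (∀ j ∈ Finset.range (n + 1), 1 + w * q ^ (h + j) ≠ 0) ∧
    (1 + q) * ∑' k : ℕ, (-1 : ℂ) ^ k * w ^ k * q ^ (h * k) *
        ((1 - q ^ (k + x)) / (1 - q)) ^ n
      = (1 + q) / (1 - q) ^ n * ∑ j ∈ Finset.range (n + 1),
          (n.choose j : ℂ) * (-1 : ℂ) ^ j * q ^ (x * j) / (1 + w * q ^ (h + j)) := by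
  have hq1 : ‖q‖ ≤ 1 := le_of_lt hq
  have key : ∀ j : ℕ, ‖-(w * q ^ (h + j))‖ < 1 := by
    intro j
    rw [norm_neg, norm_mul, norm_pow]
    calc ‖w‖ * ‖q‖ ^ (h + j) ≤ 1 * ‖q‖ ^ (h + j) := by gcongr
      _ = ‖q‖ ^ (h + j) := one_mul _
      _ ≤ ‖q‖ ^ 1 := pow_le_pow_of_le_one (norm_nonneg q) hq1 (by omega)
      _ < 1 := by simpa using hq
  have hden : ∀ j : ℕ, (1 : ℂ) + w * q ^ (h + j) ≠ 0 := by
    intro j hzero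
    have h1 : w * q ^ (h + j) = -1 := by linear_combination hzero
    have : ‖-(w * q ^ (h + j))‖ = 1 := by rw [h1]; simp
    linarith [key j]
  have hqne1 : (1 : ℂ) - q ≠ 0 := by
    intro hcon
    have : q = 1 := by linear_combination -hcon
    rw [this] at hq; simp at hq
  -- summability
  have hsum : Summable (fun k : ℕ =>
      ‖(-1 : ℂ) ^ k * w ^ k * q ^ (h * k) * ((1 - q ^ (k + x)) / (1 - q)) ^ n‖) := by
    have hg : Summable (fun k : ℕ => (2 / ‖1 - q‖) ^ n * ‖q‖ ^ k) :=
      (summable_geometric_of_lt_one (norm_nonneg q) hq).mul_left _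
    refine Summable.of_nonneg_of_le (fun k => norm_nonneg _) (fun k => ?_) hg
    · rw [norm_mul, norm_mul, norm_mul, norm_pow, norm_pow, norm_pow, norm_pow,
        norm_neg, norm_one, one_pow, one_mul, norm_div]
      have h1 : ‖w‖ ^ k * ‖q‖ ^ (h * k) ≤ 1 * ‖q‖ ^ k := by
        apply mul_le_mul
        · exact pow_le_one₀ (norm_nonneg w) hw
        · exact pow_le_pow_of_le_one (norm_nonneg q) hq1 (Nat.le_mul_of_pos_left k hh)
        · positivity
        · norm_num
      have h2 : (‖1 - q ^ (k + x)‖ / ‖1 - q‖) ^ n ≤ (2 / ‖1 - q‖) ^ n := by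
        gcongr
        calc ‖1 - q ^ (k + x)‖ ≤ ‖(1 : ℂ)‖ + ‖q ^ (k + x)‖ := norm_sub_le _ _
          _ ≤ 1 + 1 := by
              rw [norm_one, norm_pow]
              gcongr
              exact pow_le_one₀ (norm_nonneg q) hq1
          _ = 2 := by norm_num
      calc ‖w‖ ^ k * ‖q‖ ^ (h * k) * (‖1 - q ^ (k + x)‖ / ‖1 - q‖) ^ n
          ≤ 1 * ‖q‖ ^ k * (2 / ‖1 - q‖) ^ n := by
            apply mul_le_mul h1 h2 (by positivity) (by positivity)
        _ = (2 / ‖1 - q‖) ^ n * ‖q‖ ^ k := by ring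
  refine ⟨hsum, fun j _ => hden j, ?_⟩
  -- expand each term via binomial theorem
  have expand : ∀ k : ℕ, (-1 : ℂ) ^ k * w ^ k * q ^ (h * k) *
      ((1 - q ^ (k + x)) / (1 - q)) ^ n
      = ∑ j ∈ Finset.range (n + 1),
          ((n.choose j : ℂ) * (-1 : ℂ) ^ j * q ^ (x * j) / (1 - q) ^ n) *
            (-(w * q ^ (h + j))) ^ k := by
    intro k
    rw [div_pow, sub_eq_add_neg (1 : ℂ), add_comm (1 : ℂ), add_pow]
    rw [Finset.sum_div, Finset.mul_sum]
    apply Finset.sum_congr rfl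
    intro j _
    have hpow : q ^ (h * k) * q ^ ((k + x) * j) = q ^ (x * j) * q ^ ((h + j) * k) := by
      rw [← pow_add, ← pow_add]
      congr 1
      ring
    rw [neg_pow (q ^ (k + x)) j, neg_pow (w * q ^ (h + j)) k, mul_pow w, ← pow_mul, ← pow_mul]
    rw [mul_comm (k + x) j, mul_comm (h + j) k] at hpow
    field_simp
    linear_combination ((-1:ℂ)^k * w^k * (-1)^j * (n.choose j : ℂ) * 1^(n-j)) * hpow
  -- compute tsum
  have hsummable_j : ∀ j : ℕ,
      Summable (fun k : ℕ => ((n.choose j : ℂ) * (-1 : ℂ) ^ j * q ^ (x * j) / (1 - q) ^ n) *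
        (-(w * q ^ (h + j))) ^ k) := fun j =>
    (summable_geometric_of_norm_lt_one (key j)).mul_left _
  have htsum : ∑' k : ℕ, (-1 : ℂ) ^ k * w ^ k * q ^ (h * k) *
      ((1 - q ^ (k + x)) / (1 - q)) ^ n
      = ∑ j ∈ Finset.range (n + 1),
          ((n.choose j : ℂ) * (-1 : ℂ) ^ j * q ^ (x * j) / (1 - q) ^ n) *
            (1 + w * q ^ (h + j))⁻¹ := by
    calc ∑' k : ℕ, (-1 : ℂ) ^ k * w ^ k * q ^ (h * k) * ((1 - q ^ (k + x)) / (1 - q)) ^ n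
        = ∑' k : ℕ, ∑ j ∈ Finset.range (n + 1),
            ((n.choose j : ℂ) * (-1 : ℂ) ^ j * q ^ (x * j) / (1 - q) ^ n) *
              (-(w * q ^ (h + j))) ^ k := by
          exact tsum_congr expand
      _ = ∑ j ∈ Finset.range (n + 1), ∑' k : ℕ,
            ((n.choose j : ℂ) * (-1 : ℂ) ^ j * q ^ (x * j) / (1 - q) ^ n) *
              (-(w * q ^ (h + j))) ^ k := by
          exact Summable.tsum_finsetSum (fun j _ => hsummable_j j)
      _ = ∑ j ∈ Finset.range (n + 1),
            ((n.choose j : ℂ) * (-1 : ℂ) ^ j * q ^ (x * j) / (1 - q) ^ n) *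
              (1 + w * q ^ (h + j))⁻¹ := by
          apply Finset.sum_congr rfl
          intro j _
          rw [tsum_mul_left, tsum_geometric_of_norm_lt_one (key j)]
          congr 1
          rw [sub_neg_eq_add]
  rw [htsum, Finset.mul_sum, Finset.mul_sum]
  apply Finset.sum_congr rfl
  intro j _
  have h1 : (1 - q) ^ n ≠ 0 := pow_ne_zero _ hqne1
  field_simp
end

section
/- Let d be an odd positive integer and x ≥ 0 an integer. Then the distribution relation E^{(h)}_{n,q,w}(x) = ([2]_q/[2]_{q^d}) · ((1−q^d)/(1−q))^n · Σ_{a=0}^{d−1} q^{ha} w^a (−1)^a · [2]_{q^d} Σ_{m=0}^{∞} (−1)^m w^{dm} q^{dhm} ((1−q^{dm+x+a})/(1−q^d))^n holds, where all series converge absolutely; the inner series is the value E^{(h)}_{n,q^d,w^d}((x+a)/d) of the twisted (h,q^d)-Euler polynomial, so E^{(h)}_{n,q,w}(x) = ([2]_q/[2]_{q^d}) [d]_q^n Σ_{a=0}^{d−1} q^{ha} w^a (−1)^a E^{(h)}_{n,q^d,w^d}((x+a)/d). -/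
lemma euler_aux_summable (q w : ℂ) (hq : ‖q‖ < 1) (hw : ‖w‖ ≤ 1)
    (j : ℕ) (hj : 1 ≤ j) (n : ℕ) (g : ℕ → ℂ) (hg : ∀ k, ‖g k‖ ≤ 2)
    (s : ℂ) :
    Summable (fun k : ℕ => ‖(-1 : ℂ) ^ k * w ^ k * q ^ (j * k) * (g k / s) ^ n‖) := by
  have hq1 : ‖q‖ ^ j < 1 := by
    calc ‖q‖ ^ j ≤ ‖q‖ ^ 1 := pow_le_pow_of_le_one (norm_nonneg q) hq.le hj
    _ = ‖q‖ := pow_one _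
    _ < 1 := hq
  have hgeo : Summable (fun k : ℕ => (2 / ‖s‖) ^ n * (‖q‖ ^ j) ^ k) :=
    (summable_geometric_of_lt_one (by positivity) hq1).mul_left _
  apply Summable.of_nonneg_of_le (fun k => norm_nonneg _) _ hgeo
  intro k
  have h1 : ‖(-1 : ℂ) ^ k * w ^ k * q ^ (j * k) * (g k / s) ^ n‖
      = ‖w‖ ^ k * (‖q‖ ^ j) ^ k * (‖g k‖ / ‖s‖) ^ n := by
    simp [norm_mul, norm_pow, norm_div, ← pow_mul]
  rw [h1]
  calc ‖w‖ ^ k * (‖q‖ ^ j) ^ k * (‖g k‖ / ‖s‖) ^ n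
      ≤ 1 * (‖q‖ ^ j) ^ k * (2 / ‖s‖) ^ n := by
        gcongr
        · exact pow_le_one₀ (norm_nonneg w) hw
        · exact hg k
    _ = (2 / ‖s‖) ^ n * (‖q‖ ^ j) ^ k := by ring

/-- distribution relation for twisted `(h,q)`-Euler polynomials. For `q ∈ ℂ`
with `0 < |q| < 1`, `|w| ≤ 1`, `h ≥ 1`, `n ≥ 0`, `d` odd positive and `x ≥ 0`:
all series converge absolutely and
`E^{(h)}_{n,q,w}(x) = ([2]_q/[2]_{q^d}) [d]_q^n ∑_{a<d} q^{ha} w^a (−1)^a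
  E^{(h)}_{n,q^d,w^d}((x+a)/d)`,
where the inner Euler polynomial values are given by their convergent series. -/
theorem twisted_hq_euler_polynomial_distribution
    (q w : ℂ) (hq0 : q ≠ 0) (hq : ‖q‖ < 1) (hw : ‖w‖ ≤ 1)
    (h : ℕ) (hh : 1 ≤ h) (n : ℕ)
    (d : ℕ) (hd : Odd d) (hdpos : 0 < d) (x : ℕ) :
    Summable (fun k : ℕ =>
        ‖(-1 : ℂ) ^ k * w ^ k * q ^ (h * k) * ((1 - q ^ (k + x)) / (1 - q)) ^ n‖) ∧
    (∀ a ∈ Finset.range d, Summable (fun m : ℕ =>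
        ‖(-1 : ℂ) ^ m * w ^ (d * m) * q ^ (d * h * m) *
          ((1 - q ^ (d * m + x + a)) / (1 - q ^ d)) ^ n‖)) ∧
    (1 + q) * ∑' k : ℕ, (-1 : ℂ) ^ k * w ^ k * q ^ (h * k) *
        ((1 - q ^ (k + x)) / (1 - q)) ^ n
      = (1 + q) / (1 + q ^ d) * ((1 - q ^ d) / (1 - q)) ^ n *
          ∑ a ∈ Finset.range d, q ^ (h * a) * w ^ a * (-1 : ℂ) ^ a *
            ((1 + q ^ d) * ∑' m : ℕ, (-1 : ℂ) ^ m * w ^ (d * m) * q ^ (d * h * m) *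
              ((1 - q ^ (d * m + x + a)) / (1 - q ^ d)) ^ n) := by
  have hqd : ‖q ^ d‖ < 1 := by
    rw [norm_pow]
    calc ‖q‖ ^ d ≤ ‖q‖ ^ 1 := pow_le_pow_of_le_one (norm_nonneg q) hq.le hdpos
    _ < 1 := by simpa using hq
  have hs1 : (1 : ℂ) - q ≠ 0 := by
    intro hc
    have : q = 1 := by linear_combination -hc
    simp [this] at hq
  have hs2 : (1 : ℂ) - q ^ d ≠ 0 := by
    intro hc
    have : q ^ d = 1 := by linear_combination -hc
    simp [this] at hqd
  have hs3 : (1 : ℂ) + q ^ d ≠ 0 := by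
    intro hc
    have : q ^ d = -1 := by linear_combination hc
    simp [this] at hqd
  have hgen : ∀ y : ℕ, ‖(1 : ℂ) - q ^ y‖ ≤ 2 := by
    intro y
    calc ‖(1 : ℂ) - q ^ y‖ ≤ ‖(1 : ℂ)‖ + ‖q ^ y‖ := norm_sub_le _ _
    _ ≤ 1 + 1 := by
        simp only [norm_one, norm_pow]
        gcongr
        exact pow_le_one₀ (norm_nonneg q) hq.le
    _ = 2 := by norm_num
  have S1 : Summable (fun k : ℕ =>
      ‖(-1 : ℂ) ^ k * w ^ k * q ^ (h * k) * ((1 - q ^ (k + x)) / (1 - q)) ^ n‖) :=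
    euler_aux_summable q w hq hw h hh n (fun k => 1 - q ^ (k + x)) (fun k => hgen _) (1 - q)
  have hwd : ‖w ^ d‖ ≤ 1 := by
    rw [norm_pow]; exact pow_le_one₀ (norm_nonneg w) hw
  have S2 : ∀ a : ℕ, Summable (fun m : ℕ =>
      ‖(-1 : ℂ) ^ m * w ^ (d * m) * q ^ (d * h * m) *
        ((1 - q ^ (d * m + x + a)) / (1 - q ^ d)) ^ n‖) := by
    intro a
    have := euler_aux_summable (q ^ d) (w ^ d) hqd hwd h hh n
      (fun m => 1 - q ^ (d * m + x + a)) (fun m => hgen _) (1 - q ^ d)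
    have heq : (fun m : ℕ => ‖(-1 : ℂ) ^ m * (w ^ d) ^ m * (q ^ d) ^ (h * m) *
        ((1 - q ^ (d * m + x + a)) / (1 - q ^ d)) ^ n‖)
        = fun m : ℕ => ‖(-1 : ℂ) ^ m * w ^ (d * m) * q ^ (d * h * m) *
          ((1 - q ^ (d * m + x + a)) / (1 - q ^ d)) ^ n‖ := by
      funext m
      rw [← pow_mul, ← pow_mul, mul_assoc d h m]
    rw [← heq]
    exact this
  refine ⟨S1, fun a _ => S2 a, ?_⟩
  set F : ℕ → ℂ := fun k => (-1 : ℂ) ^ k * w ^ k * q ^ (h * k) *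
    ((1 - q ^ (k + x)) / (1 - q)) ^ n with hF
  have hFs : Summable F := Summable.of_norm S1
  haveI : NeZero d := ⟨hdpos.ne'⟩
  -- pointwise identity
  have hpt : ∀ a m : ℕ, F (d * m + a)
      = q ^ (h * a) * w ^ a * (-1 : ℂ) ^ a * ((1 - q ^ d) / (1 - q)) ^ n *
        ((-1 : ℂ) ^ m * w ^ (d * m) * q ^ (d * h * m) *
          ((1 - q ^ (d * m + x + a)) / (1 - q ^ d)) ^ n) := by
    intro a m
    have e1 : (-1 : ℂ) ^ (d * m + a) = (-1 : ℂ) ^ m * (-1 : ℂ) ^ a := by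
      rw [pow_add, pow_mul, hd.neg_one_pow]
    have e2 : q ^ (h * (d * m + a)) = q ^ (d * h * m) * q ^ (h * a) := by
      rw [← pow_add]; ring_nf
    have e3 : w ^ (d * m + a) = w ^ (d * m) * w ^ a := pow_add w _ _
    have e4 : ((1 - q ^ (d * m + a + x)) / (1 - q)) ^ n
        = ((1 - q ^ d) / (1 - q)) ^ n * ((1 - q ^ (d * m + x + a)) / (1 - q ^ d)) ^ n := by
      rw [← mul_pow]
      congr 1
      rw [show d * m + a + x = d * m + x + a by ring]
      field_simp
    simp only [hF]
    rw [e1, e2, e3, e4]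
    ring
  -- reindexing
  have key : ∑' k : ℕ, F k = ∑ a ∈ Finset.range d, ∑' m : ℕ, F (d * m + a) := by
    let E : Fin d × ℕ ≃ ℕ := (Equiv.prodComm (Fin d) ℕ).trans (Nat.divModEquiv d).symm
    have hE : ∀ p : Fin d × ℕ, E p = d * p.2 + (p.1 : ℕ) := by
      intro p
      simp [E, Nat.divModEquiv, mul_comm]
    rw [← E.tsum_eq F]
    have hsum2 : Summable (F ∘ E) := hFs.comp_injective E.injective
    rw [show (fun p : Fin d × ℕ => F (E p)) = F ∘ E from rfl]
    rw [Summable.tsum_prod' hsum2 (fun b => hsum2.prod_factor b)]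
    rw [← Fin.sum_univ_eq_sum_range fun a => ∑' m : ℕ, F (d * m + a)]
    rw [tsum_fintype]
    apply Finset.sum_congr rfl
    intro a _
    apply tsum_congr
    intro m
    simp only [Function.comp_apply]
    rw [hE (a, m)]
  rw [key]
  rw [Finset.mul_sum, Finset.mul_sum]
  apply Finset.sum_congr rfl
  intro a _
  rw [tsum_congr (hpt a), tsum_mul_left]
  generalize (∑' m : ℕ, (-1 : ℂ) ^ m * w ^ (d * m) * q ^ (d * h * m) *
    ((1 - q ^ (d * m + x + a)) / (1 - q ^ d)) ^ n) = T
  field_simp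
end

section
/- Let d be an odd positive integer and χ a Dirichlet character modulo d with complex values. Then the series [2]_q Σ_{k=1}^{∞} χ(k) (−1)^k w^k q^{hk} [k]_q^n defining the generalized twisted (h,q)-Euler number E^{(h)}_{n,q,w,χ} converges absolutely, and E^{(h)}_{n,q,w,χ} = ([2]_q/[2]_{q^d}) · ((1−q^d)/(1−q))^n · Σ_{a=1}^{d} q^{ha} w^a χ(a) (−1)^a · [2]_{q^d} Σ_{m=0}^{∞} (−1)^m w^{dm} q^{dhm} ((1−q^{dm+a})/(1−q^d))^n, i.e. E^{(h)}_{n,q,w,χ} = ([2]_q/[2]_{q^d}) [d]_q^n Σ_{a=1}^{d} q^{ha} w^a χ(a) (−1)^a E^{(h)}_{n,q^d,w^d}(a/d). -/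
set_option maxHeartbeats 1000000


/-- For `q ∈ ℂ` with `0 < |q| < 1`, `|w| ≤ 1`, `h ≥ 1`, `n ≥ 0`, `d` odd
positive and `χ` a Dirichlet character modulo `d`: the series
`[2]_q ∑_{k≥1} χ(k) (−1)^k w^k q^{hk} [k]_q^n` defining the generalized twisted
`(h,q)`-Euler number `E^{(h)}_{n,q,w,χ}` converges absolutely and
`E^{(h)}_{n,q,w,χ} = ([2]_q/[2]_{q^d}) [d]_q^n ∑_{a=1}^{d} q^{ha} w^a χ(a) (−1)^a
  E^{(h)}_{n,q^d,w^d}(a/d)`, the inner values being given by their convergent series. -/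
theorem generalized_twisted_hq_euler_number_distribution
    (q w : ℂ) (hq0 : q ≠ 0) (hq : ‖q‖ < 1) (hw : ‖w‖ ≤ 1)
    (h : ℕ) (hh : 1 ≤ h) (n : ℕ)
    (d : ℕ) (hd : Odd d) (hdpos : 0 < d)
    (χ : ℤ → ℂ) (hχper : ∀ a : ℤ, χ (a + d) = χ a)
    (hχmul : ∀ a b : ℤ, χ (a * b) = χ a * χ b) (hχone : χ 1 = 1)
    (hχzero : ∀ a : ℤ, 1 < Int.gcd a d → χ a = 0) :
    Summable (fun k : ℕ =>
        ‖χ ((k : ℤ) + 1) * (-1 : ℂ) ^ (k + 1) * w ^ (k + 1) * q ^ (h * (k + 1)) *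
          ((1 - q ^ (k + 1)) / (1 - q)) ^ n‖) ∧
    (∀ a ∈ Finset.Icc 1 d, Summable (fun m : ℕ =>
        ‖(-1 : ℂ) ^ m * w ^ (d * m) * q ^ (d * h * m) *
          ((1 - q ^ (d * m + a)) / (1 - q ^ d)) ^ n‖)) ∧
    (1 + q) * ∑' k : ℕ, χ ((k : ℤ) + 1) * (-1 : ℂ) ^ (k + 1) * w ^ (k + 1) *
        q ^ (h * (k + 1)) * ((1 - q ^ (k + 1)) / (1 - q)) ^ n
      = (1 + q) / (1 + q ^ d) * ((1 - q ^ d) / (1 - q)) ^ n *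
          ∑ a ∈ Finset.Icc 1 d, q ^ (h * a) * w ^ a * χ (a : ℤ) * (-1 : ℂ) ^ a *
            ((1 + q ^ d) * ∑' m : ℕ, (-1 : ℂ) ^ m * w ^ (d * m) * q ^ (d * h * m) *
              ((1 - q ^ (d * m + a)) / (1 - q ^ d)) ^ n) := by
  haveI : NeZero d := ⟨hdpos.ne'⟩
  have hq0' : (0 : ℝ) ≤ ‖q‖ := norm_nonneg q
  have hq1 : ‖q‖ ≤ 1 := hq.le
  -- nonvanishing denominators
  have h1q : (1 : ℂ) - q ≠ 0 := by
    intro hc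
    have : q = 1 := by linear_combination -hc
    rw [this] at hq; simp at hq
  have hqd_norm : ‖q ^ d‖ < 1 := by
    rw [norm_pow]
    calc ‖q‖ ^ d ≤ ‖q‖ ^ 1 := pow_le_pow_of_le_one hq0' hq1 hdpos
    _ = ‖q‖ := pow_one _
    _ < 1 := hq
  have h1qd : (1 : ℂ) - q ^ d ≠ 0 := by
    intro hc
    have : q ^ d = 1 := by linear_combination -hc
    rw [this] at hqd_norm; simp at hqd_norm
  have h1pqd : (1 : ℂ) + q ^ d ≠ 0 := by
    intro hc
    have : q ^ d = -1 := by linear_combination hc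
    rw [this] at hqd_norm; simp at hqd_norm
  -- periodicity for natural multiples
  have per : ∀ (m : ℕ) (a : ℤ), χ (a + (d : ℤ) * m) = χ a := by
    intro m
    induction m with
    | zero => simp
    | succ m ih =>
      intro a
      have e1 : a + (d : ℤ) * (m + 1 : ℕ) = (a + d) + (d : ℤ) * m := by push_cast; ring
      rw [e1, ih (a + d), hχper a]
  -- χ on naturals reduces mod d
  have chnat : ∀ k : ℕ, χ (k : ℤ) = χ ((k % d : ℕ) : ℤ) := by
    intro k
    conv_lhs => rw [← Nat.mod_add_div k d]
    have : (((k % d + d * (k / d) : ℕ) : ℤ)) = ((k % d : ℕ) : ℤ) + (d : ℤ) * ((k / d : ℕ) : ℤ) := by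
      push_cast; ring
    rw [this, per]
  -- a uniform bound on ‖χ k‖ for natural k
  set B : ℝ := ∑ i ∈ Finset.range d, ‖χ (i : ℤ)‖ with hBdef
  have hB : ∀ k : ℕ, ‖χ (k : ℤ)‖ ≤ B := by
    intro k
    rw [chnat k]
    exact Finset.single_le_sum (f := fun i : ℕ => ‖χ (i : ℤ)‖)
      (fun i _ => norm_nonneg _) (Finset.mem_range.2 (Nat.mod_lt _ hdpos))
  -- the main series
  set f : ℕ → ℂ := fun k => χ ((k : ℤ) + 1) * (-1 : ℂ) ^ (k + 1) * w ^ (k + 1) *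
      q ^ (h * (k + 1)) * ((1 - q ^ (k + 1)) / (1 - q)) ^ n with hfdef
  -- Summability of the main series
  set M : ℝ := (2 / ‖1 - q‖) ^ n with hMdef
  have hM0 : 0 ≤ M := by positivity
  have hsum_norm : Summable (fun k : ℕ => ‖f k‖) := by
    refine Summable.of_nonneg_of_le (fun k => norm_nonneg _) ?_
      ((summable_geometric_of_lt_one hq0' hq).mul_left (B * M))
    · intro k
      have hchi : ‖χ ((k : ℤ) + 1)‖ ≤ B := by
        have := hB (k + 1); push_cast at this; exact this
      have hqpow : ‖q ^ (h * (k + 1))‖ ≤ ‖q‖ ^ k := by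
        rw [norm_pow]
        exact pow_le_pow_of_le_one hq0' hq1 (by nlinarith [Nat.one_le_iff_ne_zero.1 hh])
      have hwpow : ‖w ^ (k + 1)‖ ≤ 1 := by
        rw [norm_pow]; exact pow_le_one₀ (norm_nonneg w) hw
      have hlast : ‖((1 - q ^ (k + 1)) / (1 - q)) ^ n‖ ≤ M := by
        rw [norm_pow, hMdef]
        apply pow_le_pow_left₀ (norm_nonneg _)
        rw [norm_div]
        apply div_le_div_of_nonneg_right ?_ (by positivity)
        calc ‖1 - q ^ (k + 1)‖ ≤ ‖(1 : ℂ)‖ + ‖q ^ (k + 1)‖ := norm_sub_le _ _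
        _ = 1 + ‖q‖ ^ (k + 1) := by rw [norm_one, norm_pow]
        _ ≤ 1 + 1 := by
            have : ‖q‖ ^ (k + 1) ≤ 1 := pow_le_one₀ hq0' hq1
            linarith
        _ = 2 := by norm_num
      have hneg : ‖(-1 : ℂ) ^ (k + 1)‖ = 1 := by simp
      calc ‖f k‖ = ‖χ ((k : ℤ) + 1)‖ * ‖(-1 : ℂ) ^ (k + 1)‖ * ‖w ^ (k + 1)‖ *
          ‖q ^ (h * (k + 1))‖ * ‖((1 - q ^ (k + 1)) / (1 - q)) ^ n‖ := by
            simp [hfdef, norm_mul]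
      _ ≤ B * 1 * 1 * ‖q‖ ^ k * M := by
            have h0 : 0 ≤ B := le_trans (norm_nonneg _) (hB 0)
            rw [hneg]
            have s1 : ‖χ ((k : ℤ) + 1)‖ * 1 ≤ B * 1 := by simpa using hchi
            have s2 : ‖χ ((k : ℤ) + 1)‖ * 1 * ‖w ^ (k + 1)‖ ≤ B * 1 * 1 :=
              mul_le_mul s1 hwpow (norm_nonneg _) (by simpa using h0)
            have s3 : ‖χ ((k : ℤ) + 1)‖ * 1 * ‖w ^ (k + 1)‖ * ‖q ^ (h * (k + 1))‖ ≤
                B * 1 * 1 * ‖q‖ ^ k :=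
              mul_le_mul s2 hqpow (norm_nonneg _) (by simpa using h0)
            exact mul_le_mul s3 hlast (norm_nonneg _)
              (mul_nonneg (by simpa using h0) (pow_nonneg hq0' k))
      _ = B * M * ‖q‖ ^ k := by ring
  have hsumf : Summable f := hsum_norm.of_norm
  -- Summability of the inner series
  set M2 : ℝ := (2 / ‖1 - q ^ d‖) ^ n with hM2def
  have inner_norm : ∀ a : ℕ, Summable (fun m : ℕ =>
      ‖(-1 : ℂ) ^ m * w ^ (d * m) * q ^ (d * h * m) *
        ((1 - q ^ (d * m + a)) / (1 - q ^ d)) ^ n‖) := by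
    intro a
    refine Summable.of_nonneg_of_le (fun m => norm_nonneg _) ?_
      ((summable_geometric_of_lt_one hq0' hq).mul_left M2)
    · intro m
      have hqpow : ‖q ^ (d * h * m)‖ ≤ ‖q‖ ^ m := by
        rw [norm_pow]
        apply pow_le_pow_of_le_one hq0' hq1
        calc m = 1 * 1 * m := by ring
        _ ≤ d * h * m := by
            apply Nat.mul_le_mul_right
            exact Nat.mul_le_mul hdpos hh
      have hwpow : ‖w ^ (d * m)‖ ≤ 1 := by
        rw [norm_pow]; exact pow_le_one₀ (norm_nonneg w) hw
      have hlast : ‖((1 - q ^ (d * m + a)) / (1 - q ^ d)) ^ n‖ ≤ M2 := by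
        rw [norm_pow, hM2def]
        apply pow_le_pow_left₀ (norm_nonneg _)
        rw [norm_div]
        apply div_le_div_of_nonneg_right ?_ (by positivity)
        calc ‖1 - q ^ (d * m + a)‖ ≤ ‖(1 : ℂ)‖ + ‖q ^ (d * m + a)‖ := norm_sub_le _ _
        _ = 1 + ‖q‖ ^ (d * m + a) := by rw [norm_one, norm_pow]
        _ ≤ 1 + 1 := by
            have : ‖q‖ ^ (d * m + a) ≤ 1 := pow_le_one₀ hq0' hq1
            linarith
        _ = 2 := by norm_num
      have hM20 : 0 ≤ M2 := by positivity
      calc ‖(-1 : ℂ) ^ m * w ^ (d * m) * q ^ (d * h * m) *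
          ((1 - q ^ (d * m + a)) / (1 - q ^ d)) ^ n‖
          = ‖(-1 : ℂ) ^ m‖ * ‖w ^ (d * m)‖ * ‖q ^ (d * h * m)‖ *
            ‖((1 - q ^ (d * m + a)) / (1 - q ^ d)) ^ n‖ := by simp [norm_mul]
      _ = ‖w ^ (d * m)‖ * ‖q ^ (d * h * m)‖ *
            ‖((1 - q ^ (d * m + a)) / (1 - q ^ d)) ^ n‖ := by simp
      _ ≤ 1 * ‖q‖ ^ m * M2 :=
            mul_le_mul (mul_le_mul hwpow hqpow (norm_nonneg _) zero_le_one) hlast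
              (norm_nonneg _) (mul_nonneg zero_le_one (pow_nonneg hq0' m))
      _ = M2 * ‖q‖ ^ m := by ring
  refine ⟨hsum_norm, fun a _ => inner_norm a, ?_⟩
  -- the key pointwise identity: for 1 ≤ a, f (m * d + (a - 1)) factors
  have key : ∀ a : ℕ, 1 ≤ a → ∀ m : ℕ,
      f (m * d + (a - 1)) =
        (q ^ (h * a) * w ^ a * χ (a : ℤ) * (-1 : ℂ) ^ a * ((1 - q ^ d) / (1 - q)) ^ n) *
          ((-1 : ℂ) ^ m * w ^ (d * m) * q ^ (d * h * m) *
            ((1 - q ^ (d * m + a)) / (1 - q ^ d)) ^ n) := by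
    intro a ha m
    have hk : m * d + (a - 1) + 1 = d * m + a := by rw [mul_comm m d]; omega
    have hcast : ((m * d + (a - 1) : ℕ) : ℤ) + 1 = ((d * m + a : ℕ) : ℤ) := by
      rw [show ((m * d + (a - 1) : ℕ) : ℤ) + 1 = ((m * d + (a - 1) + 1 : ℕ) : ℤ) by
        push_cast; ring, hk]
    have hχa : χ ((d * m + a : ℕ) : ℤ) = χ (a : ℤ) := by
      have := per m (a : ℤ)
      have e : ((d * m + a : ℕ) : ℤ) = (a : ℤ) + (d : ℤ) * (m : ℤ) := by push_cast; ring
      rw [e, this]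
    have hneg : (-1 : ℂ) ^ (d * m + a) = (-1 : ℂ) ^ m * (-1 : ℂ) ^ a := by
      rw [pow_add, pow_mul, hd.neg_one_pow]
    have hwp : w ^ (d * m + a) = w ^ (d * m) * w ^ a := pow_add w _ _
    have hqp : q ^ (h * (d * m + a)) = q ^ (d * h * m) * q ^ (h * a) := by
      rw [← pow_add]; congr 1; ring
    have hdiv : (1 - q ^ (d * m + a)) / (1 - q) =
        ((1 - q ^ d) / (1 - q)) * ((1 - q ^ (d * m + a)) / (1 - q ^ d)) := by
      field_simp
    rw [hfdef]
    simp only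
    rw [hcast, hk, hχa, hneg, hwp, hqp, hdiv, mul_pow]
    ring
  -- inner (complex) summability
  have inner_sum : ∀ a : ℕ, Summable (fun m : ℕ =>
      (-1 : ℂ) ^ m * w ^ (d * m) * q ^ (d * h * m) *
        ((1 - q ^ (d * m + a)) / (1 - q ^ d)) ^ n) := fun a => (inner_norm a).of_norm
  -- reindex the series over residues mod d
  set E : ℕ ≃ Fin d × ℕ := (Nat.divModEquiv d).trans (Equiv.prodComm _ _) with hEdef
  have hEsymm : ∀ (b : Fin d) (m : ℕ), E.symm (b, m) = m * d + (b : ℕ) := by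
    intro b m; rfl
  have hsumE : Summable (fun p : Fin d × ℕ => f (E.symm p)) :=
    E.symm.summable_iff.2 hsumf
  have hfib : ∀ b : Fin d, Summable (fun m : ℕ => f (E.symm (b, m))) := by
    intro b
    have hb1 : 1 ≤ (b : ℕ) + 1 := Nat.le_add_left 1 _
    have : (fun m : ℕ => f (E.symm (b, m))) = fun m =>
        (q ^ (h * ((b : ℕ) + 1)) * w ^ ((b : ℕ) + 1) * χ (((b : ℕ) + 1 : ℕ) : ℤ) *
          (-1 : ℂ) ^ ((b : ℕ) + 1) * ((1 - q ^ d) / (1 - q)) ^ n) *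
          ((-1 : ℂ) ^ m * w ^ (d * m) * q ^ (d * h * m) *
            ((1 - q ^ (d * m + ((b : ℕ) + 1))) / (1 - q ^ d)) ^ n) := by
      funext m
      rw [hEsymm]
      have := key ((b : ℕ) + 1) hb1 m
      simpa using this
    rw [this]
    exact (inner_sum _).mul_left _
  have step1 : ∑' k : ℕ, f k = ∑' p : Fin d × ℕ, f (E.symm p) :=
    (E.symm.tsum_eq f).symm
  have step2 : ∑' p : Fin d × ℕ, f (E.symm p) =
      ∑' b : Fin d, ∑' m : ℕ, f (E.symm (b, m)) := Summable.tsum_prod' hsumE hfib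
  have step3 : ∑' b : Fin d, ∑' m : ℕ, f (E.symm (b, m)) =
      ∑ b : Fin d, ∑' m : ℕ, f (m * d + (b : ℕ)) := by
    rw [tsum_fintype]
    apply Finset.sum_congr rfl
    intro b _
    congr 1
  -- convert Fin d sum to sum over Icc 1 d
  have step4 : ∑ b : Fin d, ∑' m : ℕ, f (m * d + (b : ℕ)) =
      ∑ a ∈ Finset.Icc 1 d, ∑' m : ℕ, f (m * d + (a - 1)) := by
    rw [Fin.sum_univ_eq_sum_range (fun j => ∑' m : ℕ, f (m * d + j))]
    apply Finset.sum_nbij' (i := fun j => j + 1) (j := fun a => a - 1)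
    · intro j hj; simp only [Finset.mem_range] at hj; simp only [Finset.mem_Icc]; omega
    · intro a ha; simp only [Finset.mem_Icc] at ha; simp only [Finset.mem_range]; omega
    · intro j hj; simp
    · intro a ha; simp only [Finset.mem_Icc] at ha; omega
    · intro j hj; simp
  -- evaluate each residue-class series
  have step5 : ∀ a ∈ Finset.Icc 1 d,
      ∑' m : ℕ, f (m * d + (a - 1)) =
        (q ^ (h * a) * w ^ a * χ (a : ℤ) * (-1 : ℂ) ^ a * ((1 - q ^ d) / (1 - q)) ^ n) *
          ∑' m : ℕ, (-1 : ℂ) ^ m * w ^ (d * m) * q ^ (d * h * m) *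
            ((1 - q ^ (d * m + a)) / (1 - q ^ d)) ^ n := by
    intro a ha
    rw [Finset.mem_Icc] at ha
    rw [tsum_congr (key a ha.1), tsum_mul_left]
  -- put everything together
  have lhs_eq : ∑' k : ℕ, f k =
      ∑ a ∈ Finset.Icc 1 d,
        (q ^ (h * a) * w ^ a * χ (a : ℤ) * (-1 : ℂ) ^ a * ((1 - q ^ d) / (1 - q)) ^ n) *
          ∑' m : ℕ, (-1 : ℂ) ^ m * w ^ (d * m) * q ^ (d * h * m) *
            ((1 - q ^ (d * m + a)) / (1 - q ^ d)) ^ n := by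
    rw [step1, step2, step3, step4]
    exact Finset.sum_congr rfl step5
  show (1 + q) * ∑' k : ℕ, f k = _
  rw [lhs_eq, Finset.mul_sum, Finset.mul_sum]
  apply Finset.sum_congr rfl
  intro a _
  field_simp
end

section
/- For every integer x ≥ 0, the twisted (h,q)-Euler polynomial satisfies the addition formula E^{(h)}_{n,q,w}(x) = Σ_{j=0}^{n} C(n,j) q^{xj} [x]_q^{n−j} E^{(h)}_{j,q,w}, where E^{(h)}_{j,q,w} = E^{(h)}_{j,q,w}(0) are the twisted (h,q)-Euler numbers. -/
lemma summ_aux (q w : ℂ) (hq : ‖q‖ < 1) (hw : ‖w‖ ≤ 1)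
    (h : ℕ) (hh : 1 ≤ h) (j : ℕ) :
    Summable (fun k : ℕ => (-1 : ℂ) ^ k * w ^ k * q ^ (h * k) *
      ((1 - q ^ k) / (1 - q)) ^ j) := by
  have hq1 : (1 : ℂ) - q ≠ 0 := by
    intro hc
    have : q = 1 := by linear_combination -hc
    simp [this] at hq
  apply Summable.of_norm_bounded (g := fun k => (2 / ‖1 - q‖) ^ j * ‖q‖ ^ k)
  · exact (summable_geometric_of_lt_one (norm_nonneg q) hq).mul_left _
  · intro k
    have h1 : ‖(-1 : ℂ) ^ k * w ^ k * q ^ (h * k) * ((1 - q ^ k) / (1 - q)) ^ j‖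
        = ‖w‖ ^ k * ‖q‖ ^ (h * k) * (‖1 - q ^ k‖ / ‖1 - q‖) ^ j := by
      simp [norm_mul, norm_pow, norm_div]
    rw [h1]
    have hb : ‖1 - q ^ k‖ / ‖1 - q‖ ≤ 2 / ‖1 - q‖ := by
      gcongr
      calc ‖1 - q ^ k‖ ≤ ‖(1 : ℂ)‖ + ‖q ^ k‖ := norm_sub_le _ _
        _ ≤ 1 + 1 := by
            simp only [norm_one, norm_pow]
            gcongr
            exact pow_le_one₀ (norm_nonneg q) hq.le
        _ = 2 := by norm_num
    have hqk : ‖q‖ ^ (h * k) ≤ ‖q‖ ^ k := by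
      rw [pow_mul]
      apply pow_le_pow_left₀ (pow_nonneg (norm_nonneg q) _)
      calc ‖q‖ ^ h ≤ ‖q‖ ^ 1 := pow_le_pow_of_le_one (norm_nonneg q) hq.le hh
        _ = ‖q‖ := pow_one _
    calc ‖w‖ ^ k * ‖q‖ ^ (h * k) * (‖1 - q ^ k‖ / ‖1 - q‖) ^ j
        ≤ 1 * ‖q‖ ^ k * (2 / ‖1 - q‖) ^ j := by
          have h2 : ‖w‖ ^ k ≤ 1 := pow_le_one₀ (norm_nonneg w) hw
          have h3 : (0:ℝ) ≤ (‖1 - q ^ k‖ / ‖1 - q‖) ^ j := by positivity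
          gcongr <;> positivity
      _ = (2 / ‖1 - q‖) ^ j * ‖q‖ ^ k := by ring

/-- addition formula for twisted `(h,q)`-Euler polynomials. For `q ∈ ℂ`
with `0 < |q| < 1`, `|w| ≤ 1`, `h ≥ 1`, `n ≥ 0` and every integer `x ≥ 0`:
`E^{(h)}_{n,q,w}(x) = ∑_{j≤n} C(n,j) q^{xj} [x]_q^{n−j} E^{(h)}_{j,q,w}`, where both
sides are given by their convergent series (`E^{(h)}_{j,q,w} = E^{(h)}_{j,q,w}(0)`). -/
theorem twisted_hq_euler_polynomial_addition
    (q w : ℂ) (hq0 : q ≠ 0) (hq : ‖q‖ < 1) (hw : ‖w‖ ≤ 1)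
    (h : ℕ) (hh : 1 ≤ h) (n : ℕ) (x : ℕ) :
    (1 + q) * ∑' k : ℕ, (-1 : ℂ) ^ k * w ^ k * q ^ (h * k) *
        ((1 - q ^ (k + x)) / (1 - q)) ^ n
      = ∑ j ∈ Finset.range (n + 1),
          (n.choose j : ℂ) * q ^ (x * j) * ((1 - q ^ x) / (1 - q)) ^ (n - j) *
            ((1 + q) * ∑' k : ℕ, (-1 : ℂ) ^ k * w ^ k * q ^ (h * k) *
              ((1 - q ^ k) / (1 - q)) ^ j) := by
  have hq1 : (1 : ℂ) - q ≠ 0 := by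
    intro hc
    have : q = 1 := by linear_combination -hc
    simp [this] at hq
  have key : ∀ k : ℕ, (-1 : ℂ) ^ k * w ^ k * q ^ (h * k) *
      ((1 - q ^ (k + x)) / (1 - q)) ^ n
      = ∑ j ∈ Finset.range (n + 1),
          (n.choose j : ℂ) * q ^ (x * j) * ((1 - q ^ x) / (1 - q)) ^ (n - j) *
            ((-1 : ℂ) ^ k * w ^ k * q ^ (h * k) * ((1 - q ^ k) / (1 - q)) ^ j) := by
    intro k
    have hsplit : (1 - q ^ (k + x)) / (1 - q)
        = q ^ x * ((1 - q ^ k) / (1 - q)) + (1 - q ^ x) / (1 - q) := by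
      field_simp
      ring
    rw [hsplit, add_pow]
    rw [Finset.mul_sum]
    apply Finset.sum_congr rfl
    intro j hj
    rw [mul_pow, ← pow_mul]
    ring
  rw [tsum_congr key]
  rw [Summable.tsum_finsetSum (fun j hj => ((summ_aux q w hq hw h hh j).mul_left _))]
  rw [Finset.mul_sum]
  apply Finset.sum_congr rfl
  intro j hj
  rw [tsum_mul_left]
  ring
end

section
/- (Theorem 1, distribution property.) For all integers a ≥ 0 and N ≥ 0, each denominator 1 + ξ^{dp^N} q^{(h+j)dp^N} (0 ≤ j ≤ n) has absolute value 1 (in particular is nonzero), and Σ_{i=0}^{p−1} μ^{(h)}_{n,ξ,q}(a + i·dp^N, N+1) = μ^{(h)}_{n,ξ,q}(a, N); that is, the assignment a + dp^N ℤ_p ↦ μ^{(h)}_{n,ξ,q}(a, N) satisfies the distribution (compatibility) relation on X = proj lim ℤ/dp^Nℤ. -/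
open Filter

/-- The value `μ^{(h)}_{n,ξ,q}(a + d p^N ℤ_p)` of the twisted `(h,q)`-Euler measure:
`((1+q)/(1−q)^n) (−1)^a ξ^a q^{ha} ∑_{j≤n} C(n,j)(−1)^j q^{aj}/(1 + ξ^{dp^N} q^{(h+j)dp^N})`. -/
noncomputable def twistedEulerMeasure {K : Type*} [Field K] (p d : ℕ) (h : ℤ) (n : ℕ)
    (ξ q : K) (a N : ℕ) : K :=
  ((1 + q) / (1 - q) ^ n) * (-1 : K) ^ a * ξ ^ a * q ^ (h * (a : ℤ)) *
    ∑ j ∈ Finset.range (n + 1),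
      (n.choose j : K) * (-1 : K) ^ j * q ^ (a * j) /
        (1 + ξ ^ (d * p ^ N) * q ^ ((h + (j : ℤ)) * ((d : ℤ) * (p : ℤ) ^ N)))

section TEMAux

open IsUltrametricDist

set_option linter.unusedSectionVars false

variable {p : ℕ} [Fact p.Prime] {K : Type*} [NontriviallyNormedField K] [IsUltrametricDist K]
  [Algebra ℚ_[p] K]

lemma tem_norm_int (halg : ∀ x : ℚ_[p], ‖algebraMap ℚ_[p] K x‖ = ‖x‖) (k : ℤ) :
    ‖(k : K)‖ = ‖(k : ℚ_[p])‖ := by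
  rw [← map_intCast (algebraMap ℚ_[p] K) k, halg]

lemma tem_norm_int_le_one (halg : ∀ x : ℚ_[p], ‖algebraMap ℚ_[p] K x‖ = ‖x‖) (k : ℤ) :
    ‖(k : K)‖ ≤ 1 := by
  rw [tem_norm_int halg]; exact Padic.norm_int_le_one k

lemma tem_norm_dvd (halg : ∀ x : ℚ_[p], ‖algebraMap ℚ_[p] K x‖ = ‖x‖) {k : ℤ}
    (hk : (p : ℤ) ∣ k) : ‖(k : K)‖ ≤ (p : ℝ)⁻¹ := by
  obtain ⟨c, rfl⟩ := hk
  rw [tem_norm_int halg]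
  push_cast
  rw [norm_mul]
  calc ‖(p : ℚ_[p])‖ * ‖(c : ℚ_[p])‖ ≤ (p : ℝ)⁻¹ * 1 :=
        mul_le_mul (le_of_eq Padic.norm_p) (Padic.norm_int_le_one c)
          (norm_nonneg _) (by positivity)
    _ = (p : ℝ)⁻¹ := mul_one _

lemma tem_near1_norm {x : K} (hx : ‖x - 1‖ < 1) : ‖x‖ = 1 := by
  have h1 : x = 1 + (x - 1) := by ring
  rw [h1, norm_add_eq_max_of_norm_ne_norm (by rw [norm_one]; exact fun h => absurd h.symm hx.ne),
    norm_one, max_eq_left hx.le]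

lemma tem_near1_ne_zero {x : K} (hx : ‖x - 1‖ < 1) : x ≠ 0 := by
  intro h
  rw [h] at hx
  simp at hx

lemma tem_near1_mul {x y : K} (hx : ‖x - 1‖ < 1) (hy : ‖y - 1‖ < 1) : ‖x * y - 1‖ < 1 := by
  have h1 : x * y - 1 = x * (y - 1) + (x - 1) := by ring
  rw [h1]
  refine (norm_add_le_max _ _).trans_lt (max_lt ?_ hx)
  rw [norm_mul, tem_near1_norm hx, one_mul]
  exact hy

lemma tem_near1_inv {x : K} (hx : ‖x - 1‖ < 1) : ‖x⁻¹ - 1‖ < 1 := by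
  have hx0 : x ≠ 0 := tem_near1_ne_zero hx
  have h1 : x⁻¹ - 1 = x⁻¹ * (1 - x) := by field_simp
  rw [h1, norm_mul, norm_inv, tem_near1_norm hx, inv_one, one_mul, ← neg_sub, norm_neg]
  exact hx

lemma tem_near1_pow {x : K} (hx : ‖x - 1‖ < 1) (k : ℕ) : ‖x ^ k - 1‖ < 1 := by
  induction k with
  | zero => simpa using one_pos
  | succ k ih => rw [pow_succ]; exact tem_near1_mul ih hx

lemma tem_near1_zpow {x : K} (hx : ‖x - 1‖ < 1) (k : ℤ) : ‖x ^ k - 1‖ < 1 := by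
  cases k with
  | ofNat k => rw [Int.ofNat_eq_coe, zpow_natCast]; exact tem_near1_pow hx k
  | negSucc k => rw [zpow_negSucc]; exact tem_near1_inv (tem_near1_pow hx _)

lemma tem_root_near1 (halg : ∀ x : ℚ_[p], ‖algebraMap ℚ_[p] K x‖ = ‖x‖)
    {x : K} {m : ℕ} (hx : x ^ p ^ m = 1) : ‖x - 1‖ < 1 := by
  by_contra hge
  push_neg at hge
  set t := x - 1 with ht
  have hone : (1 : ℝ) < p := by exact_mod_cast (Fact.out : p.Prime).one_lt
  have htpos : (0 : ℝ) < ‖t‖ ^ p ^ m := by positivity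
  obtain ⟨P, hP⟩ : ∃ P, p ^ m = P + 1 :=
    ⟨p ^ m - 1, (Nat.succ_pred_eq_of_pos (pow_pos (Fact.out : p.Prime).pos m)).symm⟩
  have h1 : (∑ k ∈ Finset.range (P + 2), t ^ k * ((p ^ m).choose k : K)) = 1 := by
    have hxt : x = t + 1 := by ring
    rw [← hx, hxt, add_pow]
    simp [hP]
  rw [show P + 2 = (P + 1) + 1 by ring, Finset.sum_range_succ, Finset.sum_range_succ'] at h1
  have hlast : t ^ (P + 1) * ((p ^ m).choose (P + 1) : K) = t ^ p ^ m := by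
    rw [← hP, Nat.choose_self]; simp
  have hzero : t ^ 0 * ((p ^ m).choose 0 : K) = 1 := by simp
  rw [hlast, hzero] at h1
  have hteq : t ^ p ^ m = -∑ i ∈ Finset.range P, t ^ (i + 1) * ((p ^ m).choose (i + 1) : K) := by
    linear_combination h1
  have hb : ‖t ^ p ^ m‖ ≤ (p : ℝ)⁻¹ * ‖t‖ ^ p ^ m := by
    rw [hteq, norm_neg]
    refine norm_sum_le_of_forall_le_of_nonneg (by positivity) ?_
    intro i hi
    rw [Finset.mem_range] at hi
    rw [norm_mul, norm_pow]
    have hc : ‖((p ^ m).choose (i + 1) : K)‖ ≤ (p : ℝ)⁻¹ := by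
      have hdvd : (p : ℤ) ∣ ((p ^ m).choose (i + 1) : ℤ) := by
        exact_mod_cast Int.natCast_dvd_natCast.mpr
          ((Fact.out : p.Prime).dvd_choose_pow (by omega) (by omega))
      have := tem_norm_dvd halg hdvd
      rwa [Int.cast_natCast] at this
    calc ‖t‖ ^ (i + 1) * ‖((p ^ m).choose (i + 1) : K)‖
        ≤ ‖t‖ ^ p ^ m * (p : ℝ)⁻¹ :=
          mul_le_mul (pow_le_pow_right₀ hge (by omega)) hc (norm_nonneg _) (by positivity)
      _ = (p : ℝ)⁻¹ * ‖t‖ ^ p ^ m := mul_comm _ _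
  rw [norm_pow] at hb
  nlinarith [inv_lt_one_of_one_lt₀ hone]

end TEMAux

lemma tem_neg_geom {K : Type*} [Field K] {x : K} (hx : 1 + x ≠ 0) {p : ℕ} (hp : Odd p) :
    ∑ i ∈ Finset.range p, (-x) ^ i = (1 + x ^ p) / (1 + x) := by
  have h1 : (-x : K) ≠ 1 := fun hh => hx (by linear_combination -hh)
  have h2 : (-x : K) - 1 ≠ 0 := fun hh => hx (by linear_combination -hh)
  rw [geom_sum_eq h1, hp.neg_pow, div_eq_div_iff h2 hx]
  ring

/-- Theorem 1, distribution property: each denominator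
`1 + ξ^{dp^N} q^{(h+j)dp^N}` has absolute value `1`, and
`∑_{i<p} μ^{(h)}_{n,ξ,q}(a + i·dp^N + dp^{N+1}ℤ_p) = μ^{(h)}_{n,ξ,q}(a + dp^N ℤ_p)`. -/
theorem twistedEulerMeasure_distribution
    {p : ℕ} [Fact p.Prime] (hp : Odd p)
    {K : Type*} [NontriviallyNormedField K] [CompleteSpace K] [IsUltrametricDist K]
    [Algebra ℚ_[p] K] (halg : ∀ x : ℚ_[p], ‖algebraMap ℚ_[p] K x‖ = ‖x‖)
    (q ξ : K) (hq : ‖1 - q‖ < (p : ℝ) ^ (-(1 : ℝ) / ((p : ℝ) - 1)))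
    (m : ℕ) (hξ : ξ ^ p ^ m = 1) (h : ℤ) (n : ℕ)
    {d : ℕ} (hd : Odd d) (hdpos : 0 < d) :
    (∀ N : ℕ, ∀ j ≤ n,
        ‖1 + ξ ^ (d * p ^ N) * q ^ ((h + (j : ℤ)) * ((d : ℤ) * (p : ℤ) ^ N))‖ = 1) ∧
    (∀ a N : ℕ,
        ∑ i ∈ Finset.range p,
            twistedEulerMeasure p d h n ξ q (a + i * (d * p ^ N)) (N + 1)
          = twistedEulerMeasure p d h n ξ q a N) := by
  have hprime : p.Prime := Fact.out
  have hone : (1 : ℝ) < p := by exact_mod_cast hprime.one_lt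
  -- `q` is close to `1`
  have hqlt : ‖1 - q‖ < 1 := by
    refine hq.trans (Real.rpow_lt_one_of_one_lt_of_neg hone ?_)
    apply div_neg_of_neg_of_pos
    · norm_num
    · linarith
  have hqnear : ‖q - 1‖ < 1 := by rwa [← norm_neg, neg_sub]
  have hq0 : q ≠ 0 := tem_near1_ne_zero hqnear
  have hξnear : ‖ξ - 1‖ < 1 := tem_root_near1 halg hξ
  -- `‖2‖ = 1` since `p` is odd
  have h2norm : ‖(2 : K)‖ = 1 := by
    have hcast : ((2 : ℤ) : K) = (2 : K) := by norm_num
    have hle : ‖((2 : ℤ) : K)‖ ≤ 1 := tem_norm_int_le_one halg 2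
    have hlt : ¬ ‖((2 : ℤ) : K)‖ < 1 := by
      rw [tem_norm_int halg, Padic.norm_intCast_lt_one_iff]
      intro hdvd
      have h1 := Int.le_of_dvd (by norm_num) hdvd
      have h2 : (2 : ℤ) ≤ p := by exact_mod_cast hprime.two_le
      have h3 : p = 2 := by omega
      rw [h3] at hp
      exact (by decide : ¬ Odd 2) hp
    rw [← hcast]
    exact le_antisymm hle (not_lt.mp hlt)
  -- the denominators all have norm one
  have hu : ∀ (A : ℕ) (B : ℤ), ‖1 + ξ ^ A * q ^ B‖ = 1 := by
    intro A B
    have h1 : ‖ξ ^ A * q ^ B - 1‖ < 1 :=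
      tem_near1_mul (tem_near1_pow hξnear A) (tem_near1_zpow hqnear B)
    have h2 : (1 : K) + ξ ^ A * q ^ B = 2 + (ξ ^ A * q ^ B - 1) := by ring
    rw [h2, IsUltrametricDist.norm_add_eq_max_of_norm_ne_norm
      (by rw [h2norm]; exact fun hcon => absurd hcon.symm h1.ne), h2norm, max_eq_left (by linarith)]
  refine ⟨fun N j _ => hu _ _, ?_⟩
  intro a N
  have hDodd : Odd (d * p ^ N) := hd.mul hp.pow
  have hxpow : ∀ j : ℕ,
      ξ ^ (d * p ^ (N + 1)) * q ^ ((h + (j : ℤ)) * ((d : ℤ) * (p : ℤ) ^ (N + 1)))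
        = (ξ ^ (d * p ^ N) * q ^ ((h + (j : ℤ)) * ((d : ℤ) * (p : ℤ) ^ N))) ^ p := by
    intro j
    rw [mul_pow, ← pow_mul,
      ← zpow_natCast (q ^ ((h + (j : ℤ)) * ((d : ℤ) * (p : ℤ) ^ N))) p, ← zpow_mul]
    congr 1
    · ring
    · push_cast
      ring
  simp only [twistedEulerMeasure]
  have key : ∀ i ∈ Finset.range p,
      ((1 + q) / (1 - q) ^ n) * (-1 : K) ^ (a + i * (d * p ^ N)) * ξ ^ (a + i * (d * p ^ N)) *
          q ^ (h * ((a + i * (d * p ^ N) : ℕ) : ℤ)) *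
          ∑ j ∈ Finset.range (n + 1),
            (n.choose j : K) * (-1 : K) ^ j * q ^ ((a + i * (d * p ^ N)) * j) /
              (1 + ξ ^ (d * p ^ (N + 1)) * q ^ ((h + (j : ℤ)) * ((d : ℤ) * (p : ℤ) ^ (N + 1))))
        = ∑ j ∈ Finset.range (n + 1),
            ((1 + q) / (1 - q) ^ n) * (-1 : K) ^ a * ξ ^ a * q ^ (h * (a : ℤ)) *
              ((n.choose j : K) * (-1 : K) ^ j * q ^ (a * j) *
                ((-(ξ ^ (d * p ^ N) * q ^ ((h + (j : ℤ)) * ((d : ℤ) * (p : ℤ) ^ N)))) ^ i /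
                  (1 + (ξ ^ (d * p ^ N) *
                    q ^ ((h + (j : ℤ)) * ((d : ℤ) * (p : ℤ) ^ N))) ^ p))) := by
    intro i _
    rw [Finset.mul_sum]
    refine Finset.sum_congr rfl fun j _ => ?_
    rw [hxpow j]
    have e1 : (-1 : K) ^ (a + i * (d * p ^ N)) = (-1 : K) ^ a * (-1 : K) ^ i := by
      rw [pow_add, mul_comm i (d * p ^ N), pow_mul, hDodd.neg_one_pow]
    have e2 : ξ ^ (a + i * (d * p ^ N)) = ξ ^ a * (ξ ^ (d * p ^ N)) ^ i := by
      rw [pow_add, mul_comm i (d * p ^ N), pow_mul]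
    have e3 : q ^ (h * ((a + i * (d * p ^ N) : ℕ) : ℤ))
        = q ^ (h * (a : ℤ)) * (q ^ (h * ((d : ℤ) * (p : ℤ) ^ N))) ^ i := by
      rw [← zpow_natCast (q ^ (h * ((d : ℤ) * (p : ℤ) ^ N))) i, ← zpow_mul, ← zpow_add₀ hq0]
      congr 1
      push_cast
      ring
    have e4 : q ^ ((a + i * (d * p ^ N)) * j)
        = q ^ (a * j) * (q ^ ((d * p ^ N) * j)) ^ i := by
      rw [show (a + i * (d * p ^ N)) * j = a * j + ((d * p ^ N) * j) * i by ring, pow_add, pow_mul q (d * p ^ N * j) i]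
    have e6 : (-(ξ ^ (d * p ^ N) * q ^ ((h + (j : ℤ)) * ((d : ℤ) * (p : ℤ) ^ N)))) ^ i
        = (-1 : K) ^ i * ((ξ ^ (d * p ^ N)) ^ i *
            (q ^ ((h + (j : ℤ)) * ((d : ℤ) * (p : ℤ) ^ N))) ^ i) := by
      rw [neg_pow, mul_pow]
    have e5 : q ^ ((h + (j : ℤ)) * ((d : ℤ) * (p : ℤ) ^ N))
        = q ^ (h * ((d : ℤ) * (p : ℤ) ^ N)) * q ^ ((d * p ^ N) * j) := by
      rw [← zpow_natCast q ((d * p ^ N) * j), ← zpow_add₀ hq0]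
      congr 1
      push_cast
      ring
    rw [e1, e2, e3, e4, e6, e5]
    ring
  refine Eq.trans (Finset.sum_congr rfl key) ?_
  rw [Finset.sum_comm, Finset.mul_sum]
  refine Finset.sum_congr rfl fun j hj => ?_
  have hden : (1 : K) + ξ ^ (d * p ^ N) * q ^ ((h + (j : ℤ)) * ((d : ℤ) * (p : ℤ) ^ N)) ≠ 0 := by
    intro hcon
    have h0 := hu (d * p ^ N) ((h + (j : ℤ)) * ((d : ℤ) * (p : ℤ) ^ N))
    rw [hcon] at h0
    simp at h0
  have hdenp : (1 : K) +
      (ξ ^ (d * p ^ N) * q ^ ((h + (j : ℤ)) * ((d : ℤ) * (p : ℤ) ^ N))) ^ p ≠ 0 := by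
    intro hcon
    have h0 := hu (d * p ^ (N + 1)) ((h + (j : ℤ)) * ((d : ℤ) * (p : ℤ) ^ (N + 1)))
    rw [hxpow j, hcon] at h0
    simp at h0
  have hgeom := tem_neg_geom hden hp
  calc
    ∑ i ∈ Finset.range p,
        ((1 + q) / (1 - q) ^ n) * (-1 : K) ^ a * ξ ^ a * q ^ (h * (a : ℤ)) *
          ((n.choose j : K) * (-1 : K) ^ j * q ^ (a * j) *
            ((-(ξ ^ (d * p ^ N) * q ^ ((h + (j : ℤ)) * ((d : ℤ) * (p : ℤ) ^ N)))) ^ i /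
              (1 + (ξ ^ (d * p ^ N) * q ^ ((h + (j : ℤ)) * ((d : ℤ) * (p : ℤ) ^ N))) ^ p)))
      = ((1 + q) / (1 - q) ^ n) * (-1 : K) ^ a * ξ ^ a * q ^ (h * (a : ℤ)) *
          ((n.choose j : K) * (-1 : K) ^ j * q ^ (a * j)) *
          ((∑ i ∈ Finset.range p,
            (-(ξ ^ (d * p ^ N) * q ^ ((h + (j : ℤ)) * ((d : ℤ) * (p : ℤ) ^ N)))) ^ i) /
              (1 + (ξ ^ (d * p ^ N) * q ^ ((h + (j : ℤ)) * ((d : ℤ) * (p : ℤ) ^ N))) ^ p)) := by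
        rw [Finset.sum_div, Finset.mul_sum]
        exact Finset.sum_congr rfl fun i _ => by ring
    _ = ((1 + q) / (1 - q) ^ n) * (-1 : K) ^ a * ξ ^ a * q ^ (h * (a : ℤ)) *
          ((n.choose j : K) * (-1 : K) ^ j * q ^ (a * j) /
            (1 + ξ ^ (d * p ^ N) * q ^ ((h + (j : ℤ)) * ((d : ℤ) * (p : ℤ) ^ N)))) := by
        rw [hgeom, div_div, mul_comm
          (1 + ξ ^ (d * p ^ N) * q ^ ((h + (j : ℤ)) * ((d : ℤ) * (p : ℤ) ^ N)))
          (1 + (ξ ^ (d * p ^ N) * q ^ ((h + (j : ℤ)) * ((d : ℤ) * (p : ℤ) ^ N))) ^ p),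
          ← div_div, div_self hdenp]
        ring
end

section
/- (Theorem 1, boundedness.) For all integers a ≥ 0 and N ≥ 0, one has ‖μ^{(h)}_{n,ξ,q}(a, N)‖ ≤ ‖1+q‖ · ‖1−q‖^{−n}; in particular the values μ^{(h)}_{n,ξ,q}(a, N) are uniformly bounded, so μ^{(h)}_{n,ξ,q} extends to a (bounded) p-adic measure on X. -/
open Filter

section Aux

open IsUltrametricDist

variable {p : ℕ} [Fact p.Prime] {K : Type*} [NontriviallyNormedField K]
  [IsUltrametricDist K] [Algebra ℚ_[p] K]

/-- Dominant-term lemma for ultrametric norms. -/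
lemma aux_add_dom {a b : K} (hb : ‖b‖ < ‖a‖) : ‖a + b‖ = ‖a‖ := by
  rw [norm_add_eq_max_of_norm_ne_norm hb.ne', sup_eq_left.mpr hb.le]

lemma aux_norm_natCast (halg : ∀ x : ℚ_[p], ‖algebraMap ℚ_[p] K x‖ = ‖x‖) (k : ℕ) :
    ‖(k : K)‖ = ‖(k : ℚ_[p])‖ := by
  rw [← map_natCast (algebraMap ℚ_[p] K), halg]

lemma aux_norm_natCast_le_one (halg : ∀ x : ℚ_[p], ‖algebraMap ℚ_[p] K x‖ = ‖x‖) (k : ℕ) :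
    ‖(k : K)‖ ≤ 1 := by
  rw [aux_norm_natCast halg]
  exact_mod_cast Padic.norm_int_le_one (k : ℤ)

lemma aux_norm_eq_one_of_pow {x : K} {k : ℕ} (hk : k ≠ 0) (h : x ^ k = 1) : ‖x‖ = 1 := by
  have h1 : ‖x‖ ^ k = 1 := by rw [← norm_pow, h, norm_one]
  rcases lt_trichotomy ‖x‖ 1 with hx | hx | hx
  · have := pow_lt_one₀ (norm_nonneg x) hx hk
    rw [h1] at this; exact absurd this (lt_irrefl 1)
  · exact hx
  · have := one_lt_pow₀ hx hk
    rw [h1] at this; exact absurd this (lt_irrefl 1)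

lemma aux_norm_q {q : K} (h1 : ‖1 - q‖ < 1) : ‖q‖ = 1 := by
  have hrw : q = 1 + -(1 - q) := by ring
  rw [hrw, aux_add_dom (by rw [norm_neg, norm_one]; exact h1), norm_one]

lemma aux_qzpow_sub_one {q : K} (h1 : ‖1 - q‖ < 1) (z : ℤ) : ‖q ^ z - 1‖ ≤ ‖1 - q‖ := by
  have hq : ‖q‖ = 1 := aux_norm_q h1
  have hq0 : q ≠ 0 := by
    intro h; rw [h, norm_zero] at hq; norm_num at hq
  have key : ∀ k : ℕ, ‖q ^ k - 1‖ ≤ ‖1 - q‖ := by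
    intro k
    rw [← geom_sum_mul q k, norm_mul]
    have hs : ‖∑ i ∈ Finset.range k, q ^ i‖ ≤ 1 :=
      norm_sum_le_of_forall_le_of_nonneg zero_le_one fun i _ => by
        rw [norm_pow, hq, one_pow]
    calc ‖∑ i ∈ Finset.range k, q ^ i‖ * ‖q - 1‖ ≤ 1 * ‖q - 1‖ := by
          exact mul_le_mul_of_nonneg_right hs (norm_nonneg _)
      _ = ‖1 - q‖ := by rw [one_mul, ← norm_neg]; congr 1; ring
  rcases le_or_gt 0 z with hz | hz
  · lift z to ℕ using hz
    rw [zpow_natCast]; exact key z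
  · obtain ⟨k, rfl⟩ : ∃ k : ℕ, z = -(k : ℤ) := ⟨z.natAbs, by omega⟩
    have hid : q ^ (-(k : ℤ)) - 1 = q ^ (-(k : ℤ)) * (1 - q ^ (k : ℕ)) := by
      rw [mul_sub, mul_one]
      congr 1
      rw [← zpow_natCast q k, ← zpow_add₀ hq0]
      simp
    rw [hid, norm_mul, norm_zpow, hq, one_zpow, one_mul, ← norm_neg]
    have : -(1 - q ^ k) = q ^ k - 1 := by ring
    rw [this]; exact key k

/-- Any `p^m`-th root of unity in `K` is at distance `< 1` from `1`. -/
lemma aux_root (halg : ∀ x : ℚ_[p], ‖algebraMap ℚ_[p] K x‖ = ‖x‖) :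
    ∀ (m : ℕ) (ξ : K), ξ ^ p ^ m = 1 → ‖ξ - 1‖ < 1 := by
  intro m
  induction m with
  | zero =>
    intro ξ hξ
    simp only [pow_zero, pow_one] at hξ
    simp [hξ]
  | succ m ih =>
    intro ξ hξ
    have hpp : p.Prime := Fact.out
    have hp1 : 0 < p := hpp.pos
    have hη : (ξ ^ p) ^ p ^ m = 1 := by
      rw [← pow_mul, ← pow_succ']
      exact hξ
    have hlt : ‖ξ ^ p - 1‖ < 1 := ih (ξ ^ p) hη
    have hnξ : ‖ξ‖ = 1 :=
      aux_norm_eq_one_of_pow (pow_ne_zero _ hpp.ne_zero) hξ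
    have hle : ‖ξ - 1‖ ≤ 1 := by
      rw [sub_eq_add_neg]
      refine (norm_add_le_max ξ (-1)).trans ?_
      simp [hnξ]
    by_contra hnot
    have ht1 : ‖ξ - 1‖ = 1 := le_antisymm hle (not_lt.mp hnot)
    set t := ξ - 1 with htdef
    have hξt : ξ = t + 1 := by rw [htdef]; ring
    have hbinom : ξ ^ p = ∑ k ∈ Finset.range (p + 1), t ^ k * (p.choose k : K) := by
      rw [hξt, add_pow]
      simp
    have hsplit : ∑ k ∈ Finset.range (p + 1), t ^ k * (p.choose k : K)
        = 1 + (∑ k ∈ Finset.Ico 1 p, t ^ k * (p.choose k : K) + t ^ p) := by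
      rw [Finset.range_eq_Ico, Finset.sum_eq_sum_Ico_succ_bot (by omega),
          Finset.sum_Ico_succ_top (by omega)]
      simp
    have hexp : ξ ^ p - 1 = t ^ p + ∑ k ∈ Finset.Ico 1 p, t ^ k * (p.choose k : K) := by
      rw [hbinom, hsplit]; ring
    have hS : ‖∑ k ∈ Finset.Ico 1 p, t ^ k * (p.choose k : K)‖ ≤ (p : ℝ)⁻¹ := by
      refine norm_sum_le_of_forall_le_of_nonneg (by positivity) fun k hk => ?_
      rw [Finset.mem_Ico] at hk
      obtain ⟨c, hc⟩ := hpp.dvd_choose_self (by omega) hk.2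
      have hcn : ‖(p.choose k : K)‖ ≤ (p : ℝ)⁻¹ := by
        rw [aux_norm_natCast halg, hc]
        push_cast
        rw [norm_mul, Padic.norm_p]
        have : ‖(c : ℚ_[p])‖ ≤ 1 := by
          exact_mod_cast Padic.norm_int_le_one (c : ℤ)
        calc (p : ℝ)⁻¹ * ‖(c : ℚ_[p])‖ ≤ (p : ℝ)⁻¹ * 1 :=
              mul_le_mul_of_nonneg_left this (by positivity)
          _ = (p : ℝ)⁻¹ := mul_one _
      have htk : ‖t ^ k‖ ≤ 1 := by
        rw [norm_pow, ht1, one_pow]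
      calc ‖t ^ k * (p.choose k : K)‖ = ‖t ^ k‖ * ‖(p.choose k : K)‖ := norm_mul _ _
        _ ≤ 1 * (p : ℝ)⁻¹ := mul_le_mul htk hcn (norm_nonneg _) zero_le_one
        _ = (p : ℝ)⁻¹ := one_mul _
    have hinv : (p : ℝ)⁻¹ < 1 := by
      rw [inv_lt_one_iff₀]
      right
      exact_mod_cast hpp.one_lt
    have htp : ‖t ^ p‖ = 1 := by rw [norm_pow, ht1, one_pow]
    have : ‖ξ ^ p - 1‖ = 1 := by
      rw [hexp, aux_add_dom (by rw [htp]; exact lt_of_le_of_lt hS hinv), htp]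
    rw [this] at hlt
    exact absurd hlt (lt_irrefl 1)

lemma aux_norm_two (halg : ∀ x : ℚ_[p], ‖algebraMap ℚ_[p] K x‖ = ‖x‖) (hp : Odd p) :
    ‖(2 : K)‖ = 1 := by
  have h2 : ((2 : ℕ) : K) = (2 : K) := by norm_num
  rw [← h2, aux_norm_natCast halg]
  have hle : ‖((2 : ℕ) : ℚ_[p])‖ ≤ 1 := by
    exact_mod_cast Padic.norm_int_le_one ((2 : ℕ) : ℤ)
  refine le_antisymm hle ?_
  by_contra hlt
  push_neg at hlt
  have hdvd : (p : ℤ) ∣ ((2 : ℕ) : ℤ) := by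
    refine Padic.norm_intCast_lt_one_iff.mp ?_
    exact_mod_cast hlt
  have hdvd' : p ∣ 2 := by exact_mod_cast hdvd
  have hpp : p.Prime := Fact.out
  have hle2 : p ≤ 2 := Nat.le_of_dvd (by norm_num) hdvd'
  have hpe : p = 2 := le_antisymm hle2 hpp.two_le
  rw [hpe] at hp
  exact absurd hp (by decide)

/-- The denominators have norm `1`. -/
lemma aux_denom (halg : ∀ x : ℚ_[p], ‖algebraMap ℚ_[p] K x‖ = ‖x‖) (hp : Odd p)
    {q ξD : K} (h1q : ‖1 - q‖ < 1) (hξD : ‖ξD - 1‖ < 1) (hnξ : ‖ξD‖ = 1) (z : ℤ) :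
    ‖1 + ξD * q ^ z‖ = 1 := by
  have h2 : ‖(2 : K)‖ = 1 := aux_norm_two halg hp
  have hrw : 1 + ξD * q ^ z = 2 + ((ξD - 1) + ξD * (q ^ z - 1)) := by ring
  have hsmall : ‖(ξD - 1) + ξD * (q ^ z - 1)‖ < ‖(2 : K)‖ := by
    rw [h2]
    refine lt_of_le_of_lt (norm_add_le_max _ _) ?_
    rw [max_lt_iff]
    constructor
    · exact hξD
    · rw [norm_mul, hnξ, one_mul]
      exact lt_of_le_of_lt (aux_qzpow_sub_one h1q z) h1q
  rw [hrw, aux_add_dom hsmall, h2]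

end Aux

/-- Theorem 1, boundedness: for all `a, N ≥ 0`,
`‖μ^{(h)}_{n,ξ,q}(a + dp^N ℤ_p)‖ ≤ ‖1+q‖ · ‖1−q‖^{−n}`, so the values are uniformly
bounded and `μ^{(h)}_{n,ξ,q}` extends to a bounded `p`-adic measure on `X`. -/
theorem twistedEulerMeasure_bounded
    {p : ℕ} [Fact p.Prime] (hp : Odd p)
    {K : Type*} [NontriviallyNormedField K] [CompleteSpace K] [IsUltrametricDist K]
    [Algebra ℚ_[p] K] (halg : ∀ x : ℚ_[p], ‖algebraMap ℚ_[p] K x‖ = ‖x‖)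
    (q ξ : K) (hq : ‖1 - q‖ < (p : ℝ) ^ (-(1 : ℝ) / ((p : ℝ) - 1)))
    (m : ℕ) (hξ : ξ ^ p ^ m = 1) (h : ℤ) (n : ℕ)
    {d : ℕ} (hd : Odd d) (hdpos : 0 < d) :
    ∀ a N : ℕ, ‖twistedEulerMeasure p d h n ξ q a N‖ ≤ ‖1 + q‖ * ‖1 - q‖⁻¹ ^ n := by
  intro a N
  have hpp : p.Prime := Fact.out
  have h1q : ‖1 - q‖ < 1 := by
    refine lt_trans hq (Real.rpow_lt_one_of_one_lt_of_neg ?_ ?_)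
    · exact_mod_cast hpp.one_lt
    · apply div_neg_of_neg_of_pos
      · norm_num
      · have : (1 : ℝ) < (p : ℝ) := by exact_mod_cast hpp.one_lt
        linarith
  have hqn : ‖q‖ = 1 := aux_norm_q h1q
  have hξn : ‖ξ‖ = 1 :=
    aux_norm_eq_one_of_pow (pow_ne_zero _ hpp.ne_zero) hξ
  have hξd : (ξ ^ (d * p ^ N)) ^ p ^ m = 1 := by
    rw [← pow_mul, mul_comm, pow_mul, hξ, one_pow]
  have hξDlt : ‖ξ ^ (d * p ^ N) - 1‖ < 1 := aux_root halg m _ hξd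
  have hξDn : ‖ξ ^ (d * p ^ N)‖ = 1 := by rw [norm_pow, hξn, one_pow]
  have hS : ‖∑ j ∈ Finset.range (n + 1),
      (n.choose j : K) * (-1 : K) ^ j * q ^ (a * j) /
        (1 + ξ ^ (d * p ^ N) * q ^ ((h + (j : ℤ)) * ((d : ℤ) * (p : ℤ) ^ N)))‖ ≤ 1 := by
    refine IsUltrametricDist.norm_sum_le_of_forall_le_of_nonneg zero_le_one fun j _ => ?_
    rw [norm_div, aux_denom halg hp h1q hξDlt hξDn, div_one, norm_mul, norm_mul,
        norm_pow, norm_pow, norm_neg, norm_one, one_pow, hqn, one_pow, mul_one, mul_one]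
    exact aux_norm_natCast_le_one halg _
  have hEq : ‖twistedEulerMeasure p d h n ξ q a N‖
      = ‖1 + q‖ / ‖1 - q‖ ^ n * ‖∑ j ∈ Finset.range (n + 1),
        (n.choose j : K) * (-1 : K) ^ j * q ^ (a * j) /
          (1 + ξ ^ (d * p ^ N) * q ^ ((h + (j : ℤ)) * ((d : ℤ) * (p : ℤ) ^ N)))‖ := by
    rw [twistedEulerMeasure, norm_mul, norm_mul, norm_mul, norm_mul, norm_div,
        norm_pow, norm_pow, norm_pow, norm_zpow, norm_neg, norm_one, one_pow,
        hqn, hξn, one_pow, one_zpow, mul_one, mul_one, mul_one]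
  rw [hEq, inv_pow, ← div_eq_mul_inv]
  exact mul_le_of_le_one_right (by positivity) hS
end

section
/- (Lemma 2.) For all integers a ≥ 0 and N ≥ 0, μ^{(h)}_{n,ξ,q}(p·a, N+1) = [p]_q^n · ((1+q)/(1+q^p)) · μ^{(h)}_{n,ξ^p,q^p}(a, N), where [p]_q = (1−q^p)/(1−q) and μ^{(h)}_{n,ξ^p,q^p} is given by the same defining formula with (ξ, q) replaced by (ξ^p, q^p); that is, for every compact-open ball U = a + dp^N ℤ_p one has μ^{(h)}_{n,ξ,q}(pU) = [p]_q^n ([2]_q/[2]_{q^p}) μ^{(h)}_{n,ξ^p,q^p}(U). -/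
open Filter

/-- Lemma 2: for every ball `U = a + dp^N ℤ_p`,
`μ^{(h)}_{n,ξ,q}(pU) = [p]_q^n ([2]_q/[2]_{q^p}) μ^{(h)}_{n,ξ^p,q^p}(U)`, i.e.
`μ^{(h)}_{n,ξ,q}(pa + dp^{N+1}ℤ_p) = ((1−q^p)/(1−q))^n ((1+q)/(1+q^p))
  μ^{(h)}_{n,ξ^p,q^p}(a + dp^N ℤ_p)`. -/
theorem twistedEulerMeasure_dilation
    {p : ℕ} [Fact p.Prime] (hp : Odd p)
    {K : Type*} [NontriviallyNormedField K] [CompleteSpace K] [IsUltrametricDist K]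
    [Algebra ℚ_[p] K] (halg : ∀ x : ℚ_[p], ‖algebraMap ℚ_[p] K x‖ = ‖x‖)
    (q ξ : K) (hq : ‖1 - q‖ < (p : ℝ) ^ (-(1 : ℝ) / ((p : ℝ) - 1)))
    (m : ℕ) (hξ : ξ ^ p ^ m = 1) (h : ℤ) (n : ℕ)
    {d : ℕ} (hd : Odd d) (hdpos : 0 < d) :
    ∀ a N : ℕ,
      twistedEulerMeasure p d h n ξ q (p * a) (N + 1)
        = ((1 - q ^ p) / (1 - q)) ^ n * ((1 + q) / (1 + q ^ p)) *
            twistedEulerMeasure p d h n (ξ ^ p) (q ^ p) a N := by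
  haveI : CharZero K := charZero_of_injective_algebraMap (algebraMap ℚ_[p] K).injective
  have hpp : p.Prime := Fact.out
  have hp2 : 2 ≤ p := hpp.two_le
  -- basic norm facts
  have hlt1 : ‖1 - q‖ < 1 := by
    refine hq.trans_le (Real.rpow_le_one_of_one_le_of_nonpos ?_ ?_)
    · exact_mod_cast Nat.one_le_of_lt hp2
    · apply div_nonpos_of_nonpos_of_nonneg
      · norm_num
      · have : (2 : ℝ) ≤ (p : ℝ) := by exact_mod_cast hp2
        linarith
  have hqle : ‖q‖ ≤ 1 := by
    have hrw : q = 1 + -(1 - q) := by ring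
    calc ‖q‖ = ‖1 + -(1 - q)‖ := by rw [← hrw]
      _ ≤ max ‖(1 : K)‖ ‖-(1 - q)‖ := IsUltrametricDist.norm_add_le_max _ _
      _ ≤ 1 := by rw [norm_one, norm_neg]; exact max_le le_rfl hlt1.le
  have hqp_lt : ‖1 - q ^ p‖ < 1 := by
    have hgeom : 1 - q ^ p = (∑ i ∈ Finset.range p, q ^ i) * (1 - q) := by
      have := geom_sum_mul q p
      linear_combination this
    have hsum : ‖∑ i ∈ Finset.range p, q ^ i‖ ≤ 1 := by
      refine IsUltrametricDist.norm_sum_le_of_forall_le_of_nonneg zero_le_one ?_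
      intro i _
      calc ‖q ^ i‖ = ‖q‖ ^ i := norm_pow q i
        _ ≤ 1 := pow_le_one₀ (norm_nonneg q) hqle
    calc ‖1 - q ^ p‖ = ‖∑ i ∈ Finset.range p, q ^ i‖ * ‖1 - q‖ := by
          rw [hgeom, norm_mul]
      _ ≤ 1 * ‖1 - q‖ := by
          exact mul_le_mul_of_nonneg_right hsum (norm_nonneg _)
      _ < 1 := by rwa [one_mul]
  have h2K : ‖(2 : K)‖ = 1 := by
    have h2Q : ‖(2 : ℚ_[p])‖ = 1 := by
      have hle : ‖(2 : ℚ_[p])‖ ≤ 1 := by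
        have := Padic.norm_int_le_one (p := p) 2
        simpa using this
      rcases lt_or_eq_of_le hle with hlt | heq
      · exfalso
        have : (p : ℤ) ∣ 2 := by
          have := (Padic.norm_intCast_lt_one_iff (p := p) (k := 2)).mp (by simpa using hlt)
          exact this
        have hple : p ≤ 2 := Nat.le_of_dvd (by norm_num) (by exact_mod_cast this)
        interval_cases p
        · exact absurd hp (by decide)
      · exact heq
    have : (2 : K) = algebraMap ℚ_[p] K 2 := by
      rw [map_ofNat]
    rw [this, halg, h2Q]
  have h1qp_ne : (1 : K) + q ^ p ≠ 0 := by
    have key : ‖(2 : K)‖ ≤ max ‖1 + q ^ p‖ ‖1 - q ^ p‖ := by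
      have hrw : (2 : K) = (1 + q ^ p) + (1 - q ^ p) := by ring
      rw [hrw]
      exact IsUltrametricDist.norm_add_le_max _ _
    have hpos : 0 < ‖1 + q ^ p‖ := by
      rcases max_cases ‖1 + q ^ p‖ ‖1 - q ^ p‖ with ⟨hm, _⟩ | ⟨hm, _⟩
      · rw [hm] at key; linarith [h2K ▸ key]
      · rw [hm] at key
        have : (1 : ℝ) ≤ ‖1 - q ^ p‖ := h2K ▸ key
        linarith
    exact fun hc => by simp [hc] at hpos
  intro a N
  -- rewrite the building blocks
  have e1 : (-1 : K) ^ (p * a) = (-1 : K) ^ a := by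
    rw [pow_mul, hp.neg_one_pow]
  have e2 : ξ ^ (p * a) = (ξ ^ p) ^ a := pow_mul ξ p a
  have e3 : q ^ (h * ((p * a : ℕ) : ℤ)) = (q ^ p) ^ (h * (a : ℤ)) := by
    rw [← zpow_natCast q p, ← zpow_mul]
    congr 1
    push_cast
    ring
  have e4 : ∀ j ∈ Finset.range (n + 1),
      (n.choose j : K) * (-1 : K) ^ j * q ^ ((p * a) * j) /
        (1 + ξ ^ (d * p ^ (N + 1)) * q ^ ((h + (j : ℤ)) * ((d : ℤ) * (p : ℤ) ^ (N + 1))))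
      = (n.choose j : K) * (-1 : K) ^ j * (q ^ p) ^ (a * j) /
        (1 + (ξ ^ p) ^ (d * p ^ N) * (q ^ p) ^ ((h + (j : ℤ)) * ((d : ℤ) * (p : ℤ) ^ N))) := by
    intro j _
    have d1 : q ^ ((p * a) * j) = (q ^ p) ^ (a * j) := by
      rw [← pow_mul]; ring_nf
    have d2 : ξ ^ (d * p ^ (N + 1)) = (ξ ^ p) ^ (d * p ^ N) := by
      rw [← pow_mul]; ring_nf
    have d3 : q ^ ((h + (j : ℤ)) * ((d : ℤ) * (p : ℤ) ^ (N + 1)))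
        = (q ^ p) ^ ((h + (j : ℤ)) * ((d : ℤ) * (p : ℤ) ^ N)) := by
      rw [← zpow_natCast q p, ← zpow_mul]
      congr 1
      push_cast
      ring
    rw [d1, d2, d3]
  rw [twistedEulerMeasure, twistedEulerMeasure, e1, e2, e3, Finset.sum_congr rfl e4]
  -- now a pure algebraic identity
  rcases Nat.eq_zero_or_pos n with hn | hn
  · subst hn
    set S : K := ∑ j ∈ Finset.range (0 + 1),
        ((0 : ℕ).choose j : K) * (-1 : K) ^ j * (q ^ p) ^ (a * j) /
          (1 + (ξ ^ p) ^ (d * p ^ N) * (q ^ p) ^ ((h + (j : ℤ)) * ((d : ℤ) * (p : ℤ) ^ N)))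
      with hSdef
    clear_value S
    simp only [pow_zero, div_one]
    field_simp
  rcases eq_or_ne (q ^ p) 1 with hqp | hqp
  · rw [hqp]
    simp only [one_zpow, one_pow, mul_one, sub_self, zero_div, zero_pow hn.ne']
    have hS : (∑ j ∈ Finset.range (n + 1),
        (n.choose j : K) * (-1 : K) ^ j / (1 + (ξ ^ p) ^ (d * p ^ N))) = 0 := by
      rw [← Finset.sum_div]
      have : (∑ j ∈ Finset.range (n + 1), (n.choose j : K) * (-1 : K) ^ j) = 0 := by
        have hZ := Int.alternating_sum_range_choose_of_ne hn.ne'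
        calc (∑ j ∈ Finset.range (n + 1), (n.choose j : K) * (-1 : K) ^ j)
            = ((∑ j ∈ Finset.range (n + 1), ((-1) ^ j * n.choose j : ℤ) : ℤ) : K) := by
              push_cast
              exact Finset.sum_congr rfl fun j _ => by ring
          _ = 0 := by rw [hZ]; norm_num
      rw [this, zero_div]
    rw [hS]
    ring
  · have hq1 : q ≠ 1 := by
      intro hc
      exact hqp (by rw [hc, one_pow])
    have h1q_ne : (1 : K) - q ≠ 0 := sub_ne_zero.mpr (Ne.symm hq1)
    have h1qp_ne' : (1 : K) - q ^ p ≠ 0 := sub_ne_zero.mpr (Ne.symm hqp)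
    rw [div_pow]
    field_simp
end

section
/- (Lemma 3.) For every integer a ≥ 0, lim_{N→∞} μ^{(h)}_{n,ξ,q}(a, N) = ((1+q)/2) · (−1)^a ξ^a q^{ha} · ((1−q^a)/(1−q))^n = q^{(h−1)a} ξ^a [a]_q^n · ((1+q)/2)(−1)^a q^a; that is, the measure μ^{(h)}_{n,ξ,q} has density q^{(h−1)t} ξ^t [t]_q^n with respect to the fermionic measure μ_{−q} (whose value on a + dp^N ℤ_p is (−q)^a (1+q)/(1+q^{dp^N}) → (−1)^a q^a (1+q)/2), i.e. dμ^{(h)}_{n,ξ,q}(t) = q^{(h−1)t} ξ^t [t]_q^n dμ_{−q}(t). -/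
open Filter

section aux
variable {K : Type*} [NormedField K] [IsUltrametricDist K]

lemma myUltraSumLe {ι : Type*} (s : Finset ι) (f : ι → K) {B : ℝ} (hB : 0 ≤ B)
    (hf : ∀ i ∈ s, ‖f i‖ ≤ B) : ‖∑ i ∈ s, f i‖ ≤ B := by
  induction s using Finset.cons_induction with
  | empty => simpa using hB
  | cons a s ha ih =>
    rw [Finset.sum_cons]
    exact le_trans (IsUltrametricDist.norm_add_le_max _ _)
      (max_le (hf a (Finset.mem_cons_self a s))
        (ih fun i hi => hf i (Finset.mem_cons.mpr (Or.inr hi))))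

lemma myPowSubOne {y : K} (hy : ‖y‖ ≤ 1) (k : ℕ) : ‖y ^ k - 1‖ ≤ ‖y - 1‖ := by
  induction k with
  | zero => simpa using norm_nonneg _
  | succ k ih =>
    have hrw : y ^ (k + 1) - 1 = y ^ k * (y - 1) + (y ^ k - 1) := by ring
    rw [hrw]
    refine le_trans (IsUltrametricDist.norm_add_le_max _ _) (max_le ?_ ih)
    have h1 : ‖y ^ k‖ ≤ 1 := by rw [norm_pow]; exact pow_le_one₀ (norm_nonneg _) hy
    calc ‖y ^ k * (y - 1)‖ = ‖y ^ k‖ * ‖y - 1‖ := norm_mul _ _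
      _ ≤ 1 * ‖y - 1‖ := by gcongr
      _ = ‖y - 1‖ := one_mul _

lemma myZpowSubOne {y : K} (hy : ‖y‖ = 1) (c : ℤ) : ‖y ^ c - 1‖ ≤ ‖y - 1‖ := by
  have hy0 : y ≠ 0 := by
    intro h0; rw [h0, norm_zero] at hy; norm_num at hy
  obtain ⟨k, rfl | rfl⟩ := c.eq_nat_or_neg
  · rw [zpow_natCast]; exact myPowSubOne hy.le k
  · have hyk : y ^ k ≠ 0 := pow_ne_zero _ hy0
    have hrw : y ^ (-(k : ℤ)) - 1 = (1 - y ^ k) * (y ^ k)⁻¹ := by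
      rw [zpow_neg, zpow_natCast]
      field_simp
    rw [hrw, norm_mul, norm_inv, norm_pow, hy, one_pow, inv_one, mul_one, norm_sub_rev]
    exact myPowSubOne hy.le k

lemma myStep {p : ℕ} (hp : p.Prime) (hnp : ‖(p : K)‖ ≤ (p : ℝ)⁻¹)
    (hint : ∀ k : ℕ, ‖(k : K)‖ ≤ 1) {y : K} (hy1 : ‖y - 1‖ ≤ 1) :
    ‖y ^ p - 1‖ ≤ ‖y - 1‖ * max (p : ℝ)⁻¹ (‖y - 1‖ ^ (p - 1)) := by
  set x := y - 1 with hx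
  have he0 : (0 : ℝ) ≤ ‖x‖ := norm_nonneg _
  have hB0 : (0 : ℝ) ≤ ‖x‖ * max (p : ℝ)⁻¹ (‖x‖ ^ (p - 1)) := by positivity
  have hyx : y = x + 1 := by rw [hx]; ring
  have hsum : y ^ p - 1 = ∑ i ∈ Finset.range p, x ^ (i + 1) * (p.choose (i + 1) : K) := by
    rw [hyx, add_pow, Finset.sum_range_succ']
    simp
  rw [hsum]
  refine myUltraSumLe _ _ hB0 ?_
  intro i hi
  rw [Finset.mem_range] at hi
  rw [norm_mul, norm_pow]
  by_cases hip : i + 1 = p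
  · rw [hip, Nat.choose_self]
    simp only [Nat.cast_one, norm_one, mul_one]
    have hrw : ‖x‖ ^ p = ‖x‖ * ‖x‖ ^ (p - 1) := by
      rw [← pow_succ']
      congr 1
      omega
    rw [hrw]
    exact mul_le_mul_of_nonneg_left (le_max_right _ _) he0
  · have hdvd : p ∣ p.choose (i + 1) := hp.dvd_choose_self (Nat.succ_ne_zero i) (by omega)
    obtain ⟨c, hc⟩ := hdvd
    have hnormc : ‖(p.choose (i + 1) : K)‖ ≤ (p : ℝ)⁻¹ := by
      rw [hc]
      push_cast
      rw [norm_mul]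
      calc ‖(p : K)‖ * ‖(c : K)‖ ≤ (p : ℝ)⁻¹ * 1 :=
            mul_le_mul hnp (hint c) (norm_nonneg _) (by positivity)
        _ = (p : ℝ)⁻¹ := mul_one _
    have he1 : ‖x‖ ^ (i + 1) ≤ ‖x‖ := by
      calc ‖x‖ ^ (i + 1) ≤ ‖x‖ ^ 1 := pow_le_pow_of_le_one he0 hy1 (by omega)
        _ = ‖x‖ := pow_one _
    calc ‖x‖ ^ (i + 1) * ‖(p.choose (i + 1) : K)‖ ≤ ‖x‖ * (p : ℝ)⁻¹ :=
          mul_le_mul he1 hnormc (norm_nonneg _) he0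
      _ ≤ _ := mul_le_mul_of_nonneg_left (le_max_left _ _) he0

end aux

/-- Lemma 3: for every integer `a ≥ 0`,
`lim_{N→∞} μ^{(h)}_{n,ξ,q}(a + dp^N ℤ_p)
  = ((1+q)/2)(−1)^a ξ^a q^{ha} ((1−q^a)/(1−q))^n
  = q^{(h−1)a} ξ^a [a]_q^n · ((1+q)/2)(−1)^a q^a`,
i.e. `dμ^{(h)}_{n,ξ,q}(t) = q^{(h−1)t} ξ^t [t]_q^n dμ_{−q}(t)`. -/
theorem twistedEulerMeasure_density
    {p : ℕ} [Fact p.Prime] (hp : Odd p)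
    {K : Type*} [NontriviallyNormedField K] [CompleteSpace K] [IsUltrametricDist K]
    [Algebra ℚ_[p] K] (halg : ∀ x : ℚ_[p], ‖algebraMap ℚ_[p] K x‖ = ‖x‖)
    (q ξ : K) (hq : ‖1 - q‖ < (p : ℝ) ^ (-(1 : ℝ) / ((p : ℝ) - 1)))
    (m : ℕ) (hξ : ξ ^ p ^ m = 1) (h : ℤ) (n : ℕ)
    {d : ℕ} (hd : Odd d) (hdpos : 0 < d) :
    ∀ a : ℕ,
      Tendsto (fun N : ℕ => twistedEulerMeasure p d h n ξ q a N) atTop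
        (nhds (((1 + q) / 2) * (-1 : K) ^ a * ξ ^ a * q ^ (h * (a : ℤ)) *
          ((1 - q ^ a) / (1 - q)) ^ n)) ∧
      ((1 + q) / 2) * (-1 : K) ^ a * ξ ^ a * q ^ (h * (a : ℤ)) *
          ((1 - q ^ a) / (1 - q)) ^ n
        = q ^ ((h - 1) * (a : ℤ)) * ξ ^ a * ((1 - q ^ a) / (1 - q)) ^ n *
            (((1 + q) / 2) * (-1 : K) ^ a * q ^ a) := by
  have hprime : p.Prime := Fact.out
  have hp1 : (1 : ℝ) < p := by exact_mod_cast hprime.one_lt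
  have hppos : (0 : ℝ) < p := by positivity
  haveI : CharZero K := charZero_of_injective_algebraMap (algebraMap ℚ_[p] K).injective
  -- norm facts
  have hnp : ‖(p : K)‖ ≤ (p : ℝ)⁻¹ := by
    rw [show ((p : ℕ) : K) = algebraMap ℚ_[p] K ((p : ℕ) : ℚ_[p]) from (map_natCast _ p).symm,
      halg, Padic.norm_p]
  have hint : ∀ k : ℕ, ‖(k : K)‖ ≤ 1 := by
    intro k
    rw [show ((k : ℕ) : K) = algebraMap ℚ_[p] K ((k : ℕ) : ℚ_[p]) from (map_natCast _ k).symm,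
      halg]
    have : ((k : ℕ) : ℚ_[p]) = ((k : ℤ) : ℚ_[p]) := by push_cast; ring
    rw [this]
    exact Padic.norm_int_le_one _
  -- ‖1 - q‖ < 1
  have hc1 : ‖1 - q‖ < 1 := by
    refine lt_of_lt_of_le hq (Real.rpow_le_one_of_one_le_of_nonpos hp1.le ?_)
    apply div_nonpos_of_nonpos_of_nonneg <;> linarith
  have hc0 : (0 : ℝ) ≤ ‖1 - q‖ := norm_nonneg _
  -- ‖q‖ = 1
  have hqn : ‖q‖ = 1 := by
    have hne : ‖(1 : K)‖ ≠ ‖-(1 - q)‖ := by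
      rw [norm_one, norm_neg]; exact fun h' => absurd (h' ▸ hc1) (lt_irrefl _)
    have := IsUltrametricDist.norm_add_eq_max_of_norm_ne_norm hne
    rw [show (1 : K) + -(1 - q) = q by ring] at this
    rw [this, norm_one, norm_neg, max_eq_left hc1.le]
  have hq0 : q ≠ 0 := by intro h0; rw [h0, norm_zero] at hqn; norm_num at hqn
  -- c^(p-1) < p⁻¹
  have hcp : ‖1 - q‖ ^ (p - 1) < (p : ℝ)⁻¹ := by
    have hne1 : (p : ℝ) - 1 ≠ 0 := by linarith
    have h2 : ((p : ℝ) ^ (-(1 : ℝ) / ((p : ℝ) - 1))) ^ (p - 1) = (p : ℝ)⁻¹ := by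
      rw [← Real.rpow_natCast ((p : ℝ) ^ (-(1 : ℝ) / ((p : ℝ) - 1))) (p - 1),
        ← Real.rpow_mul hppos.le]
      have hpn : ((p - 1 : ℕ) : ℝ) = (p : ℝ) - 1 := by
        rw [Nat.cast_sub hprime.one_le]; norm_num
      rw [hpn, div_mul_cancel₀ (-(1 : ℝ)) hne1, Real.rpow_neg hppos.le, Real.rpow_one]
    calc ‖1 - q‖ ^ (p - 1) < ((p : ℝ) ^ (-(1 : ℝ) / ((p : ℝ) - 1))) ^ (p - 1) :=
          pow_lt_pow_left₀ hq hc0 (Nat.sub_ne_zero_of_lt hprime.one_lt)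
      _ = (p : ℝ)⁻¹ := h2
  set ρ : ℝ := max (p : ℝ)⁻¹ (‖1 - q‖ ^ (p - 1)) with hρdef
  have hρ0 : (0 : ℝ) ≤ ρ := le_max_of_le_left (by positivity)
  have hρ1 : ρ < 1 := by
    apply max_lt
    · rw [inv_lt_one_iff₀]; right; exact hp1
    · exact hcp.trans (by rw [inv_lt_one_iff₀]; right; exact hp1)
  -- key induction
  have key : ∀ N : ℕ, ‖q ^ p ^ N - 1‖ ≤ ‖1 - q‖ * ρ ^ N := by
    intro N
    induction N with
    | zero => simp [norm_sub_rev q 1]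
    | succ N ih =>
      have hyp : q ^ p ^ (N + 1) = (q ^ p ^ N) ^ p := by rw [← pow_mul, pow_succ]
      have hρN1 : ρ ^ N ≤ 1 := pow_le_one₀ hρ0 hρ1.le
      have hec : ‖q ^ p ^ N - 1‖ ≤ ‖1 - q‖ := by
        calc ‖q ^ p ^ N - 1‖ ≤ ‖1 - q‖ * ρ ^ N := ih
          _ ≤ ‖1 - q‖ * 1 := mul_le_mul_of_nonneg_left hρN1 hc0
          _ = ‖1 - q‖ := mul_one _
      have hle1 : ‖q ^ p ^ N - 1‖ ≤ 1 := hec.trans hc1.le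
      have hstep := myStep hprime hnp hint hle1
      rw [hyp]
      calc ‖(q ^ p ^ N) ^ p - 1‖
          ≤ ‖q ^ p ^ N - 1‖ * max (p : ℝ)⁻¹ (‖q ^ p ^ N - 1‖ ^ (p - 1)) := hstep
        _ ≤ (‖1 - q‖ * ρ ^ N) * ρ := by
            apply mul_le_mul ih
            · exact max_le (le_max_left _ _)
                ((pow_le_pow_left₀ (norm_nonneg _) hec _).trans (le_max_right _ _))
            · positivity
            · positivity
        _ = ‖1 - q‖ * ρ ^ (N + 1) := by ring
  have hT0 : Tendsto (fun N : ℕ => ‖1 - q‖ * ρ ^ N) atTop (nhds 0) := by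
    have := (tendsto_pow_atTop_nhds_zero_of_lt_one hρ0 hρ1).const_mul ‖1 - q‖
    simpa using this
  intro a
  -- per-j denominator tendsto 2
  have hden : ∀ j : ℕ, Tendsto
      (fun N : ℕ => (1 : K) + ξ ^ (d * p ^ N) * q ^ ((h + (j : ℤ)) * ((d : ℤ) * (p : ℤ) ^ N)))
      atTop (nhds 2) := by
    intro j
    have hg : Tendsto
        (fun N : ℕ => ξ ^ (d * p ^ N) * q ^ ((h + (j : ℤ)) * ((d : ℤ) * (p : ℤ) ^ N)))
        atTop (nhds 1) := by
      rw [tendsto_iff_norm_sub_tendsto_zero]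
      apply squeeze_zero' (Eventually.of_forall fun N => norm_nonneg _) ?_ hT0
      rw [eventually_atTop]
      refine ⟨m, fun N hmN => ?_⟩
      have hξ1 : ξ ^ (d * p ^ N) = 1 := by
        have hpN : p ^ (N - m) * p ^ m = p ^ N := pow_sub_mul_pow p hmN
        have hrw : d * p ^ N = p ^ m * (d * p ^ (N - m)) := by rw [← hpN]; ring
        rw [hrw, pow_mul, hξ, one_pow]
      have hexp : (h + (j : ℤ)) * ((d : ℤ) * (p : ℤ) ^ N)
          = ((h + (j : ℤ)) * d) * ((p ^ N : ℕ) : ℤ) := by push_cast; ring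
      have hqq : q ^ ((h + (j : ℤ)) * ((d : ℤ) * (p : ℤ) ^ N))
          = (q ^ p ^ N) ^ ((h + (j : ℤ)) * d) := by
        rw [hexp, mul_comm ((h + (j : ℤ)) * (d : ℤ)), zpow_mul, zpow_natCast]
      rw [hξ1, one_mul, hqq]
      have hyn : ‖q ^ p ^ N‖ = 1 := by rw [norm_pow, hqn, one_pow]
      exact (myZpowSubOne hyn _).trans (key N)
    have := hg.const_add (1 : K)
    rwa [show (1 : K) + 1 = 2 from one_add_one_eq_two] at this
  have h2ne : (2 : K) ≠ 0 := two_ne_zero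
  -- main limit
  constructor
  · have hmain : Tendsto (fun N : ℕ => twistedEulerMeasure p d h n ξ q a N) atTop
        (nhds (((1 + q) / (1 - q) ^ n) * (-1 : K) ^ a * ξ ^ a * q ^ (h * (a : ℤ)) *
          ∑ j ∈ Finset.range (n + 1),
            (n.choose j : K) * (-1 : K) ^ j * q ^ (a * j) / 2)) := by
      simp only [twistedEulerMeasure]
      apply Tendsto.const_mul
      apply tendsto_finset_sum
      intro j _
      exact Tendsto.div tendsto_const_nhds (hden j) h2ne
    have hsumval : ∑ j ∈ Finset.range (n + 1),
        (n.choose j : K) * (-1 : K) ^ j * q ^ (a * j) / 2 = (1 - q ^ a) ^ n / 2 := by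
      rw [← Finset.sum_div]
      congr 1
      have hh : (1 : K) - q ^ a = (-(q ^ a)) + 1 := by ring
      rw [hh, add_pow]
      apply Finset.sum_congr rfl
      intro j _
      rw [neg_pow, one_pow, pow_mul]
      ring
    have heq : ((1 + q) / (1 - q) ^ n) * (-1 : K) ^ a * ξ ^ a * q ^ (h * (a : ℤ)) *
        ((1 - q ^ a) ^ n / 2)
        = ((1 + q) / 2) * (-1 : K) ^ a * ξ ^ a * q ^ (h * (a : ℤ)) *
          ((1 - q ^ a) / (1 - q)) ^ n := by
      rw [div_pow]
      generalize q ^ (h * (a : ℤ)) = Q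
      ring
    rw [hsumval] at hmain
    rwa [heq] at hmain
  · have h1 : q ^ (h * (a : ℤ)) = q ^ ((h - 1) * (a : ℤ)) * q ^ a := by
      rw [← zpow_natCast q a, ← zpow_add₀ hq0]
      congr 1
      ring
    rw [h1]
    generalize q ^ ((h - 1) * (a : ℤ)) = Q
    ring
end
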